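/- arXiv:quant-ph/0312044 — 7 statements merged into one kernel-verified Lean document; each statement's English description precedes it below -/
import Mathlib

section
/- For every n ≥ 2, the dcpo (Δⁿ, ⊑) is exact: for every x ∈ Δⁿ, the set ⇓x := {y ∈ Δⁿ : y ≪ x} is directed and has supremum x. -/
/-- Δⁿ : classical n-states. -/
def IsClassicalState (n : ℕ) (x : Fin n → ℝ) : Prop :=
  (∀ i, 0 ≤ x i) ∧ ∑ i, x i = 1

def ClState (n : ℕ) := {x : Fin n → ℝ // IsClassicalState n x}

/-- The Bayesian order (symmetric characterization). -/
def bayesLE {n : ℕ} (x y : Fin n → ℝ) : Prop :=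
  ∃ σ : Equiv.Perm (Fin n),
    Antitone (fun i => x (σ i)) ∧ Antitone (fun i => y (σ i)) ∧
    ∀ i j : Fin n, (i : ℕ) + 1 = (j : ℕ) →
      x (σ i) * y (σ j) ≤ x (σ j) * y (σ i)

def clLE {n : ℕ} (x y : ClState n) : Prop := bayesLE x.val y.val

/-- `a` is the supremum (least upper bound) of `S` with respect to `le`. -/
def IsLub' {α : Type*} (le : α → α → Prop) (S : Set α) (a : α) : Prop :=
  (∀ s ∈ S, le s a) ∧ ∀ b, (∀ s ∈ S, le s b) → le a b

/-- `x ≪ y` : for every (nonempty) directed `S` with supremum `y`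
there is `s ∈ S` with `x ⊑ s`. -/
def WayBelow {α : Type*} (le : α → α → Prop) (x y : α) : Prop :=
  ∀ S : Set α, S.Nonempty → DirectedOn le S → IsLub' le S y → ∃ s ∈ S, le x s


namespace BayesAux
variable {n : ℕ}

/-- the path from the uniform state to x -/
noncomputable def seg (n : ℕ) (x : Fin n → ℝ) (t : ℝ) : Fin n → ℝ :=
  fun i => (1 - t) / n + t * x i

variable {n : ℕ}

lemma exists_antitone_sort (f : Fin n → ℝ) :
    ∃ σ : Equiv.Perm (Fin n), Antitone (fun i => f (σ i)) := by
  refine ⟨Tuple.sort (fun i => -f i), fun p q hpq => ?_⟩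
  have := Tuple.monotone_sort (fun i => -f i) hpq
  simpa using this

lemma fin_adj_le {p q : Fin n} (h : (p : ℕ) + 1 = q) : p ≤ q := by
  rw [Fin.le_def]; omega

/-- cross inequalities from adjacent ones -/
lemma cross {A B : Fin n → ℝ} (hA : Antitone A) (hB : Antitone B)
    (hA0 : ∀ i, 0 ≤ A i) (hB0 : ∀ i, 0 ≤ B i)
    (h : ∀ p q : Fin n, (p : ℕ) + 1 = q → A p * B q ≤ A q * B p) :
    ∀ p q : Fin n, p ≤ q → A p * B q ≤ A q * B p := by
  suffices H : ∀ d : ℕ, ∀ p q : Fin n, (p : ℕ) + d = q → A p * B q ≤ A q * B p by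
    intro p q hpq
    exact H ((q : ℕ) - p) p q (by rw [Fin.le_def] at hpq; omega)
  intro d
  induction d with
  | zero =>
    intro p q hpq
    have : p = q := Fin.ext (by omega)
    subst this; rw [mul_comm]
  | succ d ih =>
    intro p q hpq
    have hqn : (q : ℕ) < n := q.2
    have hmn : (p : ℕ) + d < n := by omega
    have hmlt : (p : ℕ) + d < n := hmn
    set m : Fin n := ⟨(p : ℕ) + d, hmn⟩ with hm
    have hmv : (m : ℕ) = (p : ℕ) + d := rfl
    have h1 : A p * B m ≤ A m * B p := ih p m hmv.symm
    have h2 : A m * B q ≤ A q * B m := h m q (by omega)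
    have hmq : m ≤ q := by rw [Fin.le_def]; omega
    rcases (hB0 m).lt_or_eq with hBm | hBm
    · rcases (hA0 m).lt_or_eq with hAm | hAm
      · have key : (A p * B q) * (A m * B m) ≤ (A q * B p) * (A m * B m) := by
          have := mul_le_mul h1 h2 (mul_nonneg (hA0 m) (hB0 q)) (mul_nonneg (hA0 m) (hB0 p))
          nlinarith
        exact le_of_mul_le_mul_right key (by positivity)
      · -- A m = 0
        have hAp : A p * B m ≤ 0 := by rw [← hAm] at h1; simpa using h1
        have hAp0 : A p = 0 := le_antisymm (by nlinarith) (hA0 p)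
        rw [hAp0, zero_mul]
        exact mul_nonneg (hA0 q) (hB0 p)
    · -- B m = 0
      have hBq : B q = 0 := le_antisymm (by rw [hBm]; exact hB hmq) (hB0 q)
      rw [hBq, mul_zero]
      exact mul_nonneg (hA0 q) (hB0 p)

/-- on a positive tie-block of B, A is constant -/
lemma constC {A B : Fin n → ℝ} (hA : Antitone A) (hB : Antitone B)
    (h : ∀ p q : Fin n, (p : ℕ) + 1 = q → A p * B q ≤ A q * B p) :
    ∀ p q : Fin n, p ≤ q → B p = B q → 0 < B q → A p = A q := by
  suffices H : ∀ d : ℕ, ∀ p q : Fin n, (p : ℕ) + d = q → B p = B q → 0 < B q → A p = A q by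
    intro p q hpq
    exact H ((q : ℕ) - p) p q (by rw [Fin.le_def] at hpq; omega)
  intro d
  induction d with
  | zero =>
    intro p q hpq _ _
    have : p = q := Fin.ext (by omega)
    rw [this]
  | succ d ih =>
    intro p q hpq hBpq hBq
    have hqn : (q : ℕ) < n := q.2
    have hmn : (p : ℕ) + 1 < n + 1 := by omega
    have hmn' : (p : ℕ) + 1 < n := by omega
    set m : Fin n := ⟨(p : ℕ) + 1, hmn'⟩ with hm
    have hmv : (m : ℕ) = (p : ℕ) + 1 := rfl
    have hpm : p ≤ m := by rw [Fin.le_def]; omega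
    have hmq : m ≤ q := by rw [Fin.le_def]; omega
    have hBm : B m = B q := le_antisymm (by rw [← hBpq]; exact hB hpm) (hB hmq)
    have hcond := h p m (by omega)
    have hApm : A p ≤ A m := by
      have hBp : B p = B m := by rw [hBpq, hBm]
      rw [hBp] at hcond
      have hBmpos : 0 < B m := by rw [hBm]; exact hBq
      exact le_of_mul_le_mul_right hcond hBmpos
    have hAmp : A m ≤ A p := hA hpm
    have h1 : A p = A m := le_antisymm hApm hAmp
    exact h1.trans (ih m q (by omega) hBm hBq)

/-- zeros of B propagate to C (B in the y-role, C in the z-role) -/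
lemma zeroP {B C : Fin n → ℝ} (hB : Antitone B) (hC : Antitone C)
    (hB0 : ∀ i, 0 ≤ B i) (hC0 : ∀ i, 0 ≤ C i) (hBsum : ∑ i, B i = 1)
    (h : ∀ p q : Fin n, (p : ℕ) + 1 = q → B p * C q ≤ B q * C p) :
    ∀ p, B p = 0 → C p = 0 := by
  suffices H : ∀ m : ℕ, ∀ hm : m < n, B ⟨m, hm⟩ = 0 → C ⟨m, hm⟩ = 0 by
    intro p hp
    have := H p p.2 (by simpa using hp)
    simpa using this
  intro m
  induction m with
  | zero =>
    intro hm h0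
    exfalso
    have hall : ∀ i : Fin n, B i = 0 := by
      intro i
      have : B i ≤ B ⟨0, hm⟩ := hB (by rw [Fin.le_def]; simp)
      have := hB0 i
      linarith
    rw [Finset.sum_eq_zero (fun i _ => hall i)] at hBsum
    norm_num at hBsum
  | succ m ih =>
    intro hm h0
    have hm' : m < n := by omega
    rcases (hB0 ⟨m, hm'⟩).lt_or_eq with hpos | hzero
    · have hcond := h ⟨m, hm'⟩ ⟨m + 1, hm⟩ (by simp)
      rw [h0, zero_mul] at hcond
      have : C ⟨m + 1, hm⟩ ≤ 0 := by nlinarith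
      linarith [hC0 ⟨m + 1, hm⟩]
    · have hCm : C ⟨m, hm'⟩ = 0 := ih hm' hzero.symm
      have : C ⟨m + 1, hm⟩ ≤ C ⟨m, hm'⟩ := hC (by rw [Fin.le_def]; simp)
      have := hC0 ⟨m + 1, hm⟩
      linarith

-- placeholders for already-proved lemmas

/-- reflexivity -/
lemma bayesLE_refl (x : Fin n → ℝ) : bayesLE x x := by
  obtain ⟨σ, hσ⟩ := exists_antitone_sort x
  exact ⟨σ, hσ, hσ, fun i j _ => (mul_comm _ _).le⟩

/-- bottom element -/
lemma bayesLE_const {c : ℝ} (hc : 0 ≤ c) (z : Fin n → ℝ) : bayesLE (fun _ => c) z := by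
  obtain ⟨σ, hσ⟩ := exists_antitone_sort z
  refine ⟨σ, antitone_const, hσ, fun i j hij => ?_⟩
  have : z (σ j) ≤ z (σ i) := hσ (by rw [Fin.le_def]; omega)
  simpa [mul_comm] using mul_le_mul_of_nonneg_left this hc

/-- if x ⊑ y then y preserves strict comparisons of x -/
lemma bLE_respects' {x y : Fin n → ℝ} (h : bayesLE x y) :
    ∀ a b, x b < x a → y b ≤ y a := by
  obtain ⟨σ, hx, hy, _⟩ := h
  intro a b hab
  have ha : σ (σ.symm a) = a := σ.apply_symm_apply a
  have hb : σ (σ.symm b) = b := σ.apply_symm_apply b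
  have hpq : σ.symm a ≤ σ.symm b := by
    by_contra hcon
    push_neg at hcon
    have := hx hcon.le
    simp only [ha, hb] at this
    linarith
  have := hy hpq
  simpa [ha, hb] using this

/-- if x ⊑ y then x preserves strict comparisons of y -/
lemma bLE_respects {x y : Fin n → ℝ} (h : bayesLE x y) :
    ∀ a b, y b < y a → x b ≤ x a := by
  obtain ⟨σ, hx, hy, _⟩ := h
  intro a b hab
  set p := σ.symm a with hp
  set q := σ.symm b with hq
  have ha : σ p = a := σ.apply_symm_apply a
  have hb : σ q = b := σ.apply_symm_apply b
  have hpq : p ≤ q := by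
    by_contra hcon
    push_neg at hcon
    have := hy hcon.le
    simp only [ha, hb] at this
    linarith
  have := hx hpq
  simpa [ha, hb] using this

/-- if x ⊑ y then x is constant on positive ties of y -/
lemma bLE_eqPos {x y : Fin n → ℝ} (h : bayesLE x y) :
    ∀ a b, y a = y b → 0 < y a → x a = x b := by
  obtain ⟨σ, hx, hy, hcond⟩ := h
  have key : ∀ a b, σ.symm a ≤ σ.symm b → y a = y b → 0 < y a → x a = x b := by
    intro a b hpq hab hpos
    have ha : σ (σ.symm a) = a := σ.apply_symm_apply a
    have hb : σ (σ.symm b) = b := σ.apply_symm_apply b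
    have := constC hx hy hcond (σ.symm a) (σ.symm b) hpq
      (by simpa [ha, hb] using hab) (by simpa [hb] using hab ▸ hpos)
    simpa [ha, hb] using this
  intro a b hab hpos
  rcases le_total (σ.symm a) (σ.symm b) with h' | h'
  · exact key a b h' hab hpos
  · exact (key b a h' hab.symm (hab ▸ hpos)).symm

/-- all cross inequalities, at index level -/
lemma bLE_crossAll {x y : Fin n → ℝ} (hx0 : ∀ i, 0 ≤ x i) (hy0 : ∀ i, 0 ≤ y i)
    (h : bayesLE x y) :
    ∀ a b, y b ≤ y a → x a * y b ≤ x b * y a := by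
  intro a b hba
  rcases hba.lt_or_eq with hlt | heq
  · obtain ⟨σ, hx, hy, hcond⟩ := h
    set p := σ.symm a with hp
    set q := σ.symm b with hq
    have ha : σ p = a := σ.apply_symm_apply a
    have hb : σ q = b := σ.apply_symm_apply b
    have hpq : p ≤ q := by
      by_contra hcon
      push_neg at hcon
      have := hy hcon.le
      simp only [ha, hb] at this
      linarith
    have := cross hx hy (fun i => hx0 _) (fun i => hy0 _) hcond p q hpq
    simpa [ha, hb] using this
  · rcases (hy0 a).lt_or_eq with hpos | hzero
    · have hxab : x a = x b := bLE_eqPos h a b heq.symm hpos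
      rw [hxab, heq]
    · have hyb : y b = 0 := by rw [heq, ← hzero]
      rw [hyb, ← hzero, mul_zero, mul_zero]

/-- zeros propagate upwards, at index level -/
lemma bLE_zero {y z : Fin n → ℝ} (hy0 : ∀ i, 0 ≤ y i) (hz0 : ∀ i, 0 ≤ z i)
    (hsum : ∑ i, y i = 1) (h : bayesLE y z) :
    ∀ a, y a = 0 → z a = 0 := by
  obtain ⟨σ, hy, hz, hcond⟩ := h
  intro a ha0
  have ha : σ (σ.symm a) = a := σ.apply_symm_apply a
  have hsum' : ∑ i, y (σ i) = 1 := by rw [Equiv.sum_comp σ y]; exact hsum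
  have := zeroP hy hz (fun i => hy0 _) (fun i => hz0 _) hsum' hcond (σ.symm a)
    (by simpa [ha] using ha0)
  simpa [ha] using this

/-- antisymmetry -/
lemma bayesLE_antisymm {s x : Fin n → ℝ} (hs : IsClassicalState n s)
    (hx : IsClassicalState n x) (h1 : bayesLE s x) (h2 : bayesLE x s) : s = x := by
  have key : ∀ a b, s a * x b = s b * x a := by
    have main : ∀ a b, x b ≤ x a → s b ≤ s a → s a * x b = s b * x a := fun a b hx' hs' =>
      le_antisymm (bLE_crossAll hs.1 hx.1 h1 a b hx')
        (by have := bLE_crossAll hx.1 hs.1 h2 a b hs'; nlinarith [this])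
    obtain ⟨σ, hsσ, hxσ, _⟩ := h1
    intro a b
    rcases le_total (σ.symm a) (σ.symm b) with h' | h'
    · have ha : σ (σ.symm a) = a := σ.apply_symm_apply a
      have hb : σ (σ.symm b) = b := σ.apply_symm_apply b
      have e1 : x b ≤ x a := by have := hxσ h'; simpa [ha, hb] using this
      have e2 : s b ≤ s a := by have := hsσ h'; simpa [ha, hb] using this
      exact main a b e1 e2
    · have ha : σ (σ.symm a) = a := σ.apply_symm_apply a
      have hb : σ (σ.symm b) = b := σ.apply_symm_apply b
      have e1 : x a ≤ x b := by have := hxσ h'; simpa [ha, hb] using this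
      have e2 : s a ≤ s b := by have := hsσ h'; simpa [ha, hb] using this
      have := main b a e1 e2
      linarith
  funext a
  have : s a * (∑ b, x b) = x a * (∑ b, s b) := by
    rw [Finset.mul_sum, Finset.mul_sum]
    apply Finset.sum_congr rfl
    intro b _
    rw [key a b]; ring
  rw [hs.2, hx.2] at this
  simpa using this

/-- helper for 3-fold lex comparisons -/
lemma lex3_le {a1 a2 a3 b1 b2 b3 : ℝ}
    (h : (toLex (a1, toLex (a2, a3)) : ℝ ×ₗ (ℝ ×ₗ ℝ)) ≤ toLex (b1, toLex (b2, b3))) :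
    a1 ≤ b1 ∧ (a1 = b1 → a2 ≤ b2) ∧ (a1 = b1 → a2 = b2 → a3 ≤ b3) := by
  rw [Prod.Lex.le_iff] at h
  rcases h with h | ⟨h1, h2⟩
  · exact ⟨h.le, fun he => absurd he h.ne, fun he => absurd he h.ne⟩
  · rw [Prod.Lex.le_iff] at h2
    rcases h2 with h2 | ⟨h2, h3⟩
    · exact ⟨h1.le, fun _ => h2.le, fun _ he => absurd he h2.ne⟩
    · exact ⟨h1.le, fun _ => h2.le, fun _ _ => h3⟩

/-- transitivity (for states) -/
lemma bayesLE_trans {x y z : Fin n → ℝ} (hx : IsClassicalState n x)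
    (hy : IsClassicalState n y) (hz : IsClassicalState n z)
    (h1 : bayesLE x y) (h2 : bayesLE y z) : bayesLE x z := by
  classical
  set K : Fin n → ℝ ×ₗ (ℝ ×ₗ ℝ) := fun a => toLex (-y a, toLex (-z a, -x a)) with hK
  set τ := Tuple.sort K with hτ
  have hmono : Monotone (K ∘ τ) := Tuple.monotone_sort K
  have hfacts : ∀ p q : Fin n, p ≤ q →
      y (τ q) ≤ y (τ p) ∧ (y (τ p) = y (τ q) → z (τ q) ≤ z (τ p)) ∧
      (y (τ p) = y (τ q) → z (τ p) = z (τ q) → x (τ q) ≤ x (τ p)) := by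
    intro p q hpq
    have := lex3_le (hmono hpq)
    refine ⟨by linarith [this.1], fun he => by linarith [this.2.1 (by linarith)],
      fun he hz' => by linarith [this.2.2 (by linarith) (by linarith)]⟩
  have hyτ : Antitone (fun i => y (τ i)) := fun p q hpq => (hfacts p q hpq).1
  have hzτ : Antitone (fun i => z (τ i)) := by
    intro p q hpq
    rcases (hfacts p q hpq).1.lt_or_eq with hlt | heq
    · exact bLE_respects' h2 _ _ hlt
    · exact (hfacts p q hpq).2.1 heq.symm
  have hxτ : Antitone (fun i => x (τ i)) := by
    intro p q hpq
    rcases (hfacts p q hpq).1.lt_or_eq with hlt | heq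
    · exact bLE_respects h1 _ _ hlt
    · rcases (hy.1 (τ q)).lt_or_eq with hpos | hzero
      · exact (bLE_eqPos h1 _ _ heq.symm (heq ▸ hpos)).ge
      · have hz1 : z (τ p) = 0 := bLE_zero hy.1 hz.1 hy.2 h2 _ (by rw [heq.symm, ← hzero])
        have hz2 : z (τ q) = 0 := bLE_zero hy.1 hz.1 hy.2 h2 _ (by rw [← hzero])
        exact (hfacts p q hpq).2.2 heq.symm (by rw [hz1, hz2])
  refine ⟨τ, hxτ, hzτ, fun p q hpq => ?_⟩
  have hpq' : p ≤ q := by rw [Fin.le_def]; omega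
  rcases (hy.1 (τ q)).lt_or_eq with hpos | hzero
  · -- y (τ q) > 0
    have hyy : y (τ q) ≤ y (τ p) := hyτ hpq'
    have hzz : z (τ q) ≤ z (τ p) := hzτ hpq'
    have c1 : x (τ p) * y (τ q) ≤ x (τ q) * y (τ p) := bLE_crossAll hx.1 hy.1 h1 _ _ hyy
    have c2 : y (τ p) * z (τ q) ≤ y (τ q) * z (τ p) := bLE_crossAll hy.1 hz.1 h2 _ _ hzz
    have hyppos : 0 < y (τ p) := lt_of_lt_of_le hpos hyy
    have key : y (τ q) * (x (τ p) * z (τ q)) ≤ y (τ q) * (x (τ q) * z (τ p)) := by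
      have e1 : x (τ p) * y (τ q) * z (τ q) ≤ x (τ q) * y (τ p) * z (τ q) :=
        mul_le_mul_of_nonneg_right c1 (hz.1 _)
      have e2 : x (τ q) * (y (τ p) * z (τ q)) ≤ x (τ q) * (y (τ q) * z (τ p)) :=
        mul_le_mul_of_nonneg_left c2 (hx.1 _)
      nlinarith
    have := le_of_mul_le_mul_left key hpos
    linarith
  · -- y (τ q) = 0
    have hzq : z (τ q) = 0 := bLE_zero hy.1 hz.1 hy.2 h2 _ hzero.symm
    rw [hzq, mul_zero]
    exact mul_nonneg (hx.1 _) (hz.1 _)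


lemma state_coord_le_one {x : Fin n → ℝ} (hx : IsClassicalState n x) (i : Fin n) :
    x i ≤ 1 := by
  have : x i ≤ ∑ j, x j :=
    Finset.single_le_sum (fun j _ => hx.1 j) (Finset.mem_univ i)
  rw [hx.2] at this; exact this

lemma seg_state (hn : 0 < n) {x : Fin n → ℝ} (hx : IsClassicalState n x) {t : ℝ}
    (h0 : 0 ≤ t) (h1 : t ≤ 1) : IsClassicalState n (seg n x t) := by
  have hN : (0:ℝ) < n := by exact_mod_cast hn
  constructor
  · intro i
    have := hx.1 i
    have : (0:ℝ) ≤ (1 - t) / n := div_nonneg (by linarith) hN.le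
    have : (0:ℝ) ≤ t * x i := mul_nonneg h0 (hx.1 i)
    simp only [seg]; linarith
  · simp only [seg]
    rw [Finset.sum_add_distrib, Finset.sum_const, ← Finset.mul_sum, hx.2]
    simp [Finset.card_univ]
    field_simp
    ring

lemma seg_one (x : Fin n → ℝ) : seg n x 1 = x := by
  funext i; simp [seg]

lemma seg_anti {x : Fin n → ℝ} {σ : Equiv.Perm (Fin n)}
    (hσ : Antitone (fun i => x (σ i))) {t : ℝ} (ht : 0 ≤ t) :
    Antitone (fun i => seg n x t (σ i)) := by
  intro p q hpq
  have := hσ hpq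
  simp only [seg]
  have := mul_le_mul_of_nonneg_left this ht
  linarith

lemma seg_mono (hn : 0 < n) {x : Fin n → ℝ} {s t : ℝ}
    (hs : 0 ≤ s) (hst : s ≤ t) (ht : t ≤ 1) : bayesLE (seg n x s) (seg n x t) := by
  have hN : (0:ℝ) < n := by exact_mod_cast hn
  obtain ⟨σ, hσ⟩ := exists_antitone_sort x
  refine ⟨σ, seg_anti hσ hs, seg_anti hσ (le_trans hs hst), fun i j hij => ?_⟩
  have hij' : i ≤ j := by rw [Fin.le_def]; omega
  have huv : x (σ j) ≤ x (σ i) := hσ hij'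
  set u := x (σ i)
  set v := x (σ j)
  simp only [seg]
  have key : ((1 - s) / n + s * v) * ((1 - t) / n + t * u)
      - ((1 - s) / n + s * u) * ((1 - t) / n + t * v) = (u - v) * (t - s) / n := by
    field_simp
    ring
  have : 0 ≤ (u - v) * (t - s) / n := by
    apply div_nonneg _ hN.le
    exact mul_nonneg (by linarith) (by linarith)
  linarith

/-- transitivity along the path: if y ⊑ seg x s then y ⊑ seg x t for s ≤ t, s > 0 -/
lemma chain_trans (hn : 0 < n) {x y : Fin n → ℝ} {s t : ℝ}
    (hs : 0 < s) (hst : s ≤ t) (ht : t ≤ 1)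
    (h : bayesLE y (seg n x s)) : bayesLE y (seg n x t) := by
  have hN : (0:ℝ) < n := by exact_mod_cast hn
  obtain ⟨σ, hyσ, hsegσ, hcond⟩ := h
  have hxσ : Antitone (fun i => x (σ i)) := by
    intro p q hpq
    have := hsegσ hpq
    simp only [seg] at this
    have h' : s * x (σ q) ≤ s * x (σ p) := by linarith
    exact le_of_mul_le_mul_left h' hs
  refine ⟨σ, hyσ, seg_anti hxσ (by linarith), fun i j hij => ?_⟩
  have hij' : i ≤ j := by rw [Fin.le_def]; omega
  have hab : y (σ j) ≤ y (σ i) := hyσ hij'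
  have huv : x (σ j) ≤ x (σ i) := hxσ hij'
  set a := y (σ i)
  set b := y (σ j)
  set u := x (σ i)
  set v := x (σ j)
  have hG := hcond i j hij
  simp only [seg] at hG ⊢
  -- hG : a * ((1-s)/n + s*v) ≤ b * ((1-s)/n + s*u)
  -- want : a * ((1-t)/n + t*v) ≤ b * ((1-t)/n + t*u)
  have h1 : (a - b) * ((1 - s) / n) ≤ s * (b * u - a * v) := by nlinarith
  have h2 : 0 ≤ (a - b) * ((1 - s) / n) :=
    mul_nonneg (by linarith) (div_nonneg (by linarith) hN.le)
  have h3 : 0 ≤ b * u - a * v := by nlinarith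
  have h4 : (a - b) * ((1 - t) / n) ≤ (a - b) * ((1 - s) / n) :=
    mul_le_mul_of_nonneg_left ((div_le_div_iff_of_pos_right hN).mpr (by linarith))
      (by linarith : (0:ℝ) ≤ a - b)
  have h5 : s * (b * u - a * v) ≤ t * (b * u - a * v) :=
    mul_le_mul_of_nonneg_right hst h3
  nlinarith [h4, h1, h5]

/-- if seg x t ⊑ b along a sequence t → 1, then x ⊑ b -/
lemma lub_chain (hn : 0 < n) {x b : Fin n → ℝ} (hx : IsClassicalState n x)
    (hb : IsClassicalState n b)
    (h : ∀ k : ℕ, bayesLE (seg n x (1 - 1 / (k + 2))) b) : bayesLE x b := by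
  classical
  have hN : (0:ℝ) < n := by exact_mod_cast hn
  set f : ℕ → Equiv.Perm (Fin n) := fun k => (h k).choose with hf
  obtain ⟨σ, hσinf⟩ := Finite.exists_infinite_fiber f
  have hinf : (f ⁻¹' {σ}).Infinite := Set.infinite_coe_iff.mp hσinf
  have hprop : ∀ k ∈ f ⁻¹' {σ},
      Antitone (fun i => seg n x (1 - 1 / (k + 2 : ℝ)) (σ i)) ∧
      Antitone (fun i => b (σ i)) ∧
      ∀ i j : Fin n, (i : ℕ) + 1 = (j : ℕ) →
        seg n x (1 - 1 / (k + 2 : ℝ)) (σ i) * b (σ j) ≤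
          seg n x (1 - 1 / (k + 2 : ℝ)) (σ j) * b (σ i) := by
    intro k hk
    have hkf : f k = σ := hk
    have := (h k).choose_spec
    rw [show (h k).choose = σ from hkf] at this
    exact_mod_cast this
  obtain ⟨k0, hk0⟩ := hinf.nonempty
  have hk0t : (0:ℝ) < 1 - 1 / (k0 + 2 : ℝ) := by
    have h2 : (2:ℝ) ≤ (k0 : ℝ) + 2 := by
      have : (0:ℝ) ≤ (k0:ℝ) := Nat.cast_nonneg k0
      linarith
    have : 1 / ((k0:ℝ) + 2) ≤ 1 / 2 := by
      apply one_div_le_one_div_of_le <;> linarith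
    linarith
  have hxσ : Antitone (fun i => x (σ i)) := by
    intro p q hpq
    have := (hprop k0 hk0).1 hpq
    simp only [seg] at this
    have h' : (1 - 1 / (k0 + 2 : ℝ)) * x (σ q) ≤ (1 - 1 / (k0 + 2 : ℝ)) * x (σ p) := by
      linarith
    exact le_of_mul_le_mul_left h' hk0t
  have hbσ : Antitone (fun i => b (σ i)) := (hprop k0 hk0).2.1
  refine ⟨σ, hxσ, hbσ, fun i j hij => ?_⟩
  by_contra hcon
  push_neg at hcon
  set u := x (σ i)
  set v := x (σ j)
  set bi := b (σ i)
  set bj := b (σ j)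
  set E := u * bj - v * bi with hE
  have hEpos : 0 < E := by simp only [hE]; linarith
  obtain ⟨M, hM⟩ := exists_nat_gt (2 / E)
  obtain ⟨k, hk, hMk⟩ := hinf.exists_gt M
  have hkM : (M:ℝ) < (k:ℝ) := by exact_mod_cast hMk
  have hkpos : (0:ℝ) < k + 2 := by positivity
  set t := 1 - 1 / ((k:ℝ) + 2) with hts
  have htpos : (1:ℝ)/2 ≤ t := by
    have h2 : (2:ℝ) ≤ (k : ℝ) + 2 := by
      have : (0:ℝ) ≤ (k:ℝ) := Nat.cast_nonneg k
      linarith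
    have : 1 / ((k:ℝ) + 2) ≤ 1 / 2 := by
      apply one_div_le_one_div_of_le <;> linarith
    simp only [hts]; linarith
  have hcond := (hprop k hk).2.2 i j hij
  simp only [seg, ← hts] at hcond
  -- hcond : ((1-t)/n + t*u) * bj ≤ ((1-t)/n + t*v) * bi
  have h1t : 1 - t = 1 / ((k:ℝ) + 2) := by simp [hts]
  have hbi1 : bi ≤ 1 := state_coord_le_one hb _
  have hbj0 : 0 ≤ bj := hb.1 _
  have hbi0 : 0 ≤ bi := hb.1 _
  have hn1 : (1:ℝ) ≤ n := by exact_mod_cast hn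
  -- t * E ≤ (1-t)/n * (bi - bj) ≤ 1/(k+2)
  have key1 : t * E ≤ (1 - t) / n * (bi - bj) := by nlinarith
  have key2 : (1 - t) / n * (bi - bj) ≤ 1 / ((k:ℝ) + 2) := by
    rw [h1t]
    have hb1 : bi - bj ≤ 1 := by linarith
    have h0 : 0 ≤ 1 / ((k:ℝ) + 2) := by positivity
    have : 1 / ((k:ℝ) + 2) / n ≤ 1 / ((k:ℝ) + 2) := by
      apply div_le_self h0 hn1
    calc 1 / ((k:ℝ) + 2) / n * (bi - bj) ≤ 1 / ((k:ℝ) + 2) / n * 1 := by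
          apply mul_le_mul_of_nonneg_left hb1
          positivity
      _ ≤ 1 / ((k:ℝ) + 2) := by linarith
  have key3 : E / 2 ≤ 1 / ((k:ℝ) + 2) := by nlinarith
  have key4 : 1 / ((k:ℝ) + 2) < E / 2 := by
    have hME : 2 / E < (k:ℝ) + 2 := by linarith
    have h2E : 2 < E * ((k:ℝ) + 2) := by
      rw [div_lt_iff₀ hEpos] at hME; nlinarith
    rw [div_lt_div_iff₀ hkpos (by norm_num : (0:ℝ) < 2)]
    nlinarith
  linarith


/-- minimal positive gap of x -/
noncomputable def gap (n : ℕ) (x : Fin n → ℝ) : ℝ :=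
  if h : ((Finset.univ : Finset (Fin n × Fin n)).filter
      (fun p => x p.2 < x p.1)).Nonempty then
    (((Finset.univ : Finset (Fin n × Fin n)).filter
      (fun p => x p.2 < x p.1)).image (fun p => x p.1 - x p.2)).min'
      (h.image _)
  else 1

lemma gap_pos (x : Fin n → ℝ) : 0 < gap n x := by
  unfold gap
  split_ifs with h
  · set F := ((Finset.univ : Finset (Fin n × Fin n)).filter (fun p => x p.2 < x p.1))
    have := (F.image (fun p => x p.1 - x p.2)).min'_mem (h.image _)
    rw [Finset.mem_image] at this
    obtain ⟨p, hp, hval⟩ := this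
    rw [Finset.mem_filter] at hp
    rw [← hval]
    linarith [hp.2]
  · norm_num

lemma gap_le {x : Fin n → ℝ} {i j : Fin n} (h : x j < x i) : gap n x ≤ x i - x j := by
  unfold gap
  have hne : ((Finset.univ : Finset (Fin n × Fin n)).filter
      (fun p => x p.2 < x p.1)).Nonempty :=
    ⟨(i, j), by simp [Finset.mem_filter, h]⟩
  rw [dif_pos hne]
  apply Finset.min'_le
  rw [Finset.mem_image]
  exact ⟨(i, j), by simp [Finset.mem_filter, h]⟩

/-- the ε-lemma: seg x t is below anything ⊑ x that is close enough to x -/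
lemma epsilon_lemma (hn : 0 < n) {x : Fin n → ℝ} (hx : IsClassicalState n x) {t : ℝ}
    (h0 : 0 ≤ t) (h1 : t < 1) :
    ∃ ε > 0, ∀ s : Fin n → ℝ, IsClassicalState n s → bayesLE s x →
      (∀ i, |s i - x i| < ε) → bayesLE (seg n x t) s := by
  have hN : (0:ℝ) < n := by exact_mod_cast hn
  set g := gap n x with hg
  have hgpos : 0 < g := gap_pos x
  set D : ℝ := 2 * (1 - t) / n + 2 * t + 1 with hD
  have hDpos : 0 < D := by
    have e1 : 0 ≤ 2 * (1 - t) / n := div_nonneg (by linarith) hN.le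
    have e2 : 0 ≤ 2 * t := by linarith
    simp only [hD]; linarith
  have hnum : 0 < (1 - t) * g / n := div_pos (mul_pos (by linarith) hgpos) hN
  refine ⟨((1 - t) * g / n) / D, div_pos hnum hDpos, ?_⟩
  intro s hs hsx hnear
  set ε := ((1 - t) * g / n) / D with hε
  have hεpos : 0 < ε := div_pos hnum hDpos
  have hεD : ε * D = (1 - t) * g / n := div_mul_cancel₀ _ (ne_of_gt hDpos)
  obtain ⟨σ, hsσ, hxσ, hcond⟩ := hsx
  refine ⟨σ, seg_anti hxσ h0, hsσ, fun i j hij => ?_⟩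
  have hij' : i ≤ j := by rw [Fin.le_def]; omega
  have huv : x (σ j) ≤ x (σ i) := hxσ hij'
  have hpq : s (σ j) ≤ s (σ i) := hsσ hij'
  set u := x (σ i) with hu
  set v := x (σ j) with hv
  set p := s (σ i) with hp
  set q := s (σ j) with hq
  have hu0 : 0 ≤ u := hx.1 _
  have hv0 : 0 ≤ v := hx.1 _
  have hp0 : 0 ≤ p := hs.1 _
  have hq0 : 0 ≤ q := hs.1 _
  have hu1 : u ≤ 1 := state_coord_le_one hx _
  have hv1 : v ≤ 1 := state_coord_le_one hx _
  have hnu : |p - u| < ε := hnear (σ i)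
  have hnv : |q - v| < ε := hnear (σ j)
  simp only [seg]
  rcases huv.lt_or_eq with hlt | heq
  · -- v < u, so u - v ≥ g
    have hguv : g ≤ u - v := gap_le hlt
    have habs1 : u - ε < p := by
      have := abs_lt.mp hnu; linarith [this.1]
    have habs2 : q < v + ε := by
      have := abs_lt.mp hnv; linarith [this.2]
    have hqp : q - p ≤ -g + 2 * ε := by linarith
    have huq : u * q - v * p ≤ 2 * ε := by
      have e1 : u * q ≤ u * (v + ε) := mul_le_mul_of_nonneg_left habs2.le hu0
      have e2 : v * (u - ε) ≤ v * p := mul_le_mul_of_nonneg_left habs1.le hv0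
      nlinarith
    have hA : 0 ≤ (1 - t) / n := div_nonneg (by linarith) hN.le
    have e3 : (1 - t) / n * (q - p) ≤ (1 - t) / n * (-g + 2 * ε) :=
      mul_le_mul_of_nonneg_left hqp hA
    have e4 : t * (u * q - v * p) ≤ t * (2 * ε) :=
      mul_le_mul_of_nonneg_left huq h0
    -- total: (1-t)/n (q-p) + t (uq - vp) ≤ ε D - ε - (1-t) g / n = -ε
    have etot : (1 - t) / n * (q - p) + t * (u * q - v * p) ≤
        ε * D - ε - (1 - t) * g / n + ε := by
      have expand : (1 - t) / n * (-g + 2 * ε) + t * (2 * ε) =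
          ε * D - ε - (1 - t) * g / n := by
        simp only [hD]; field_simp; ring
      linarith
    rw [hεD] at etot
    nlinarith
  · -- u = v
    have hxx : x (σ j) = x (σ i) := heq
    rw [hxx]
    have hnn : 0 ≤ (1 - t) / (n:ℝ) + t * x (σ i) := by
      have e1 : 0 ≤ (1 - t) / (n:ℝ) := div_nonneg (by linarith) hN.le
      have e2 : 0 ≤ t * x (σ i) := mul_nonneg h0 hu0
      linarith
    exact mul_le_mul_of_nonneg_left hpq hnn


lemma isClosed_anti (σ : Equiv.Perm (Fin n)) :
    IsClosed {z : Fin n → ℝ | Antitone (fun i => z (σ i))} := by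
  have : {z : Fin n → ℝ | Antitone (fun i => z (σ i))} =
      ⋂ (p : Fin n) (q : Fin n) (_ : p ≤ q), {z : Fin n → ℝ | z (σ q) ≤ z (σ p)} := by
    ext z
    simp only [Set.mem_setOf_eq, Set.mem_iInter]
    exact ⟨fun h p q hpq => h hpq, fun h p q hpq => h p q hpq⟩
  rw [this]
  exact isClosed_iInter fun p => isClosed_iInter fun q => isClosed_iInter fun _ =>
    isClosed_le (continuous_apply (σ q)) (continuous_apply (σ p))

lemma isClosed_up (a : Fin n → ℝ) : IsClosed {z : Fin n → ℝ | bayesLE a z} := by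
  have : {z : Fin n → ℝ | bayesLE a z} =
      ⋃ σ : Equiv.Perm (Fin n),
        ({z : Fin n → ℝ | Antitone (fun i => a (σ i))} ∩
         {z : Fin n → ℝ | Antitone (fun i => z (σ i))} ∩
         ⋂ (i : Fin n) (j : Fin n) (_ : (i:ℕ) + 1 = (j:ℕ)),
           {z : Fin n → ℝ | a (σ i) * z (σ j) ≤ a (σ j) * z (σ i)}) := by
    ext z
    simp only [Set.mem_setOf_eq, Set.mem_iUnion, Set.mem_inter_iff, Set.mem_iInter, bayesLE]
    constructor
    · rintro ⟨σ, h1, h2, h3⟩; exact ⟨σ, ⟨h1, h2⟩, fun i j hij => h3 i j hij⟩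
    · rintro ⟨σ, ⟨h1, h2⟩, h3⟩; exact ⟨σ, h1, h2, fun i j hij => h3 i j hij⟩
  rw [this]
  apply isClosed_iUnion_of_finite
  intro σ
  apply IsClosed.inter
  · apply IsClosed.inter
    · by_cases h : Antitone (fun i => a (σ i))
      · convert isClosed_univ
        ext z; simp [h]
      · convert isClosed_empty
        ext z; simp [h]
    · exact isClosed_anti σ
  · exact isClosed_iInter fun i => isClosed_iInter fun j => isClosed_iInter fun _ =>
      isClosed_le (continuous_const.mul (continuous_apply (σ j)))
        (continuous_const.mul (continuous_apply (σ i)))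

lemma isClosed_down (a : Fin n → ℝ) : IsClosed {z : Fin n → ℝ | bayesLE z a} := by
  have : {z : Fin n → ℝ | bayesLE z a} =
      ⋃ σ : Equiv.Perm (Fin n),
        ({z : Fin n → ℝ | Antitone (fun i => z (σ i))} ∩
         {z : Fin n → ℝ | Antitone (fun i => a (σ i))} ∩
         ⋂ (i : Fin n) (j : Fin n) (_ : (i:ℕ) + 1 = (j:ℕ)),
           {z : Fin n → ℝ | z (σ i) * a (σ j) ≤ z (σ j) * a (σ i)}) := by
    ext z
    simp only [Set.mem_setOf_eq, Set.mem_iUnion, Set.mem_inter_iff, Set.mem_iInter, bayesLE]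
    constructor
    · rintro ⟨σ, h1, h2, h3⟩; exact ⟨σ, ⟨h1, h2⟩, fun i j hij => h3 i j hij⟩
    · rintro ⟨σ, ⟨h1, h2⟩, h3⟩; exact ⟨σ, h1, h2, fun i j hij => h3 i j hij⟩
  rw [this]
  apply isClosed_iUnion_of_finite
  intro σ
  apply IsClosed.inter
  · apply IsClosed.inter
    · exact isClosed_anti σ
    · by_cases h : Antitone (fun i => a (σ i))
      · convert isClosed_univ
        ext z; simp [h]
      · convert isClosed_empty
        ext z; simp [h]
  · exact isClosed_iInter fun i => isClosed_iInter fun j => isClosed_iInter fun _ =>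
      isClosed_le ((continuous_apply (σ i)).mul continuous_const)
        ((continuous_apply (σ j)).mul continuous_const)

lemma isClosed_states : IsClosed {f : Fin n → ℝ | IsClassicalState n f} := by
  have : {f : Fin n → ℝ | IsClassicalState n f} =
      (⋂ i : Fin n, {f : Fin n → ℝ | 0 ≤ f i}) ∩ {f : Fin n → ℝ | ∑ i, f i = 1} := by
    ext f
    simp only [Set.mem_setOf_eq, Set.mem_inter_iff, Set.mem_iInter, IsClassicalState]
  rw [this]
  exact IsClosed.inter
    (isClosed_iInter fun i => isClosed_le continuous_const (continuous_apply i))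
    (isClosed_eq (by continuity) continuous_const)

lemma isCompact_states : IsCompact {f : Fin n → ℝ | IsClassicalState n f} := by
  apply IsCompact.of_isClosed_subset
    (isCompact_Icc (a := fun _ : Fin n => (0:ℝ)) (b := fun _ => (1:ℝ)))
    isClosed_states
  intro f hf
  constructor
  · intro i; exact hf.1 i
  · intro i
    have : f i ≤ ∑ j, f j :=
      Finset.single_le_sum (fun j _ => hf.1 j) (Finset.mem_univ i)
    rw [hf.2] at this; exact this

lemma tk_mem (k : ℕ) : (0:ℝ) < 1 - 1 / (k + 2) ∧ (1:ℝ) - 1 / (k + 2) < 1 := by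
  have hk : (0:ℝ) < (k:ℝ) + 2 := by positivity
  have h2 : (2:ℝ) ≤ (k:ℝ) + 2 := by
    have : (0:ℝ) ≤ (k:ℝ) := Nat.cast_nonneg k
    linarith
  have hlt : 1 / ((k:ℝ) + 2) ≤ 1 / 2 := by
    apply one_div_le_one_div_of_le <;> linarith
  have hpos : 0 < 1 / ((k:ℝ) + 2) := by positivity
  constructor <;> [linarith; linarith]

/-- main way-below lemma: seg x t ≪ x for 0 ≤ t < 1 -/
lemma seg_wayBelow (hn : 0 < n) (x : ClState n) {t : ℝ} (h0 : 0 ≤ t) (h1 : t < 1)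
    (hseg : IsClassicalState n (seg n x.val t)) :
    WayBelow clLE ⟨seg n x.val t, hseg⟩ x := by
  intro S hne hdir hlub
  obtain ⟨ε, hεpos, hB⟩ := epsilon_lemma hn x.2 h0 h1
  -- the image of S in function space
  set SS : Set (Fin n → ℝ) := Subtype.val '' S with hSS
  have hSstates : SS ⊆ {f : Fin n → ℝ | IsClassicalState n f} := by
    rintro f ⟨s, _, rfl⟩; exact s.2
  have hclSS : closure SS ⊆ {f : Fin n → ℝ | IsClassicalState n f} :=
    isClosed_states.closure_subset_iff.mpr hSstates
  have hSdown : closure SS ⊆ {z : Fin n → ℝ | bayesLE z x.val} := by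
    apply (isClosed_down x.val).closure_subset_iff.mpr
    rintro f ⟨s, hs, rfl⟩
    exact hlub.1 s hs
  haveI : Nonempty ↥S := hne.to_subtype
  -- the compact family
  set F : ↥S → Set (Fin n → ℝ) :=
    fun s => closure SS ∩ {z : Fin n → ℝ | bayesLE s.1.1 z} with hF
  have hFdir : Directed (· ⊇ ·) F := by
    intro s1 s2
    obtain ⟨s3, hs3, h13, h23⟩ := hdir s1.1 s1.2 s2.1 s2.2
    refine ⟨⟨s3, hs3⟩, ?_, ?_⟩ <;>
    · rintro z ⟨hz1, hz2⟩
      refine ⟨hz1, ?_⟩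
      first
      | exact bayesLE_trans s1.1.2 s3.2 (hclSS hz1) h13 hz2
      | exact bayesLE_trans s2.1.2 s3.2 (hclSS hz1) h23 hz2
  have hFne : ∀ s : ↥S, (F s).Nonempty :=
    fun s => ⟨s.1.1, subset_closure ⟨s.1, s.2, rfl⟩, bayesLE_refl _⟩
  have hFcl : ∀ s : ↥S, IsClosed (F s) :=
    fun s => isClosed_closure.inter (isClosed_up _)
  have hFcp : ∀ s : ↥S, IsCompact (F s) := fun s =>
    IsCompact.of_isClosed_subset isCompact_states (hFcl s)
      (fun z hz => hclSS hz.1)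
  obtain ⟨b, hb⟩ :=
    IsCompact.nonempty_iInter_of_directed_nonempty_isCompact_isClosed F hFdir hFne hFcp hFcl
  rw [Set.mem_iInter] at hb
  have hbcl : b ∈ closure SS := (hb (Classical.arbitrary _)).1
  have hbstate : IsClassicalState n b := hclSS hbcl
  have hbub : ∀ s ∈ S, clLE s ⟨b, hbstate⟩ := fun s hs => (hb ⟨s, hs⟩).2
  have hxb : bayesLE x.val b := hlub.2 ⟨b, hbstate⟩ hbub
  have hbx : bayesLE b x.val := hSdown hbcl
  have hbeq : b = x.val := bayesLE_antisymm hbstate x.2 hbx hxb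
  -- x.val is in the closure of SS, find s ∈ S close to x
  rw [hbeq] at hbcl
  rw [Metric.mem_closure_iff] at hbcl
  obtain ⟨f, hf, hdist⟩ := hbcl ε hεpos
  obtain ⟨s, hs, rfl⟩ := hf
  refine ⟨s, hs, ?_⟩
  show bayesLE (seg n x.val t) s.val
  apply hB s.val s.2 (hlub.1 s hs)
  intro i
  calc |s.val i - x.val i| = dist (s.val i) (x.val i) := by rw [Real.dist_eq]
    _ ≤ dist s.val x.val := dist_le_pi_dist _ _ i
    _ = dist x.val s.val := dist_comm _ _
    _ < ε := hdist

end BayesAux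


open BayesAux in
/-- (Δⁿ, ⊑) is exact: for every x, ⇓x is directed with supremum x. -/
theorem classical_states_exact (n : ℕ) (hn : 2 ≤ n) (x : ClState n) :
    {y : ClState n | WayBelow clLE y x}.Nonempty ∧
    DirectedOn clLE {y : ClState n | WayBelow clLE y x} ∧
    IsLub' clLE {y : ClState n | WayBelow clLE y x} x := by
  have hn0 : 0 < n := by omega
  have hN : (0:ℝ) < n := by exact_mod_cast hn0
  -- the chain elements
  have hsegstate : ∀ t : ℝ, 0 ≤ t → t ≤ 1 → IsClassicalState n (seg n x.val t) :=
    fun t h0 h1 => seg_state hn0 x.2 h0 h1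
  have hseg_le_x : ∀ t : ℝ, 0 ≤ t → t ≤ 1 → bayesLE (seg n x.val t) x.val := by
    intro t h0 h1
    have := seg_mono (x := x.val) hn0 h0 h1 le_rfl
    rwa [seg_one] at this
  -- the canonical chain with supremum x
  set C : Set (ClState n) := {z : ClState n | ∃ t : ℝ, 0 < t ∧ t < 1 ∧
    z.val = seg n x.val t} with hC
  have hCne : C.Nonempty :=
    ⟨⟨seg n x.val (1/2), hsegstate _ (by norm_num) (by norm_num)⟩,
      ⟨1/2, by norm_num, by norm_num, rfl⟩⟩
  have hCdir : DirectedOn clLE C := by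
    rintro z1 ⟨t1, ht1, ht1', hz1⟩ z2 ⟨t2, ht2, ht2', hz2⟩
    set T := max t1 t2 with hT
    have hT1 : T < 1 := max_lt ht1' ht2'
    have hT0 : 0 < T := lt_max_of_lt_left ht1
    refine ⟨⟨seg n x.val T, hsegstate _ hT0.le hT1.le⟩,
      ⟨T, hT0, hT1, rfl⟩, ?_, ?_⟩
    · show bayesLE z1.val _
      rw [hz1]
      exact seg_mono hn0 ht1.le (le_max_left _ _) hT1.le
    · show bayesLE z2.val _
      rw [hz2]
      exact seg_mono hn0 ht2.le (le_max_right _ _) hT1.le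
  have hClub : IsLub' clLE C x := by
    constructor
    · rintro z ⟨t, ht, ht', hz⟩
      show bayesLE z.val x.val
      rw [hz]
      exact hseg_le_x t ht.le ht'.le
    · intro b hb
      show bayesLE x.val b.val
      apply lub_chain hn0 x.2 b.2
      intro k
      have hk := tk_mem k
      exact hb ⟨seg n x.val (1 - 1/(k+2)), hsegstate _ hk.1.le hk.2.le⟩
        ⟨_, hk.1, hk.2, rfl⟩
  -- elements of C are way below x
  have hCwb : ∀ z ∈ C, WayBelow clLE z x := by
    rintro z ⟨t, ht, ht', hz⟩
    have : z = ⟨seg n x.val t, hsegstate _ ht.le ht'.le⟩ := Subtype.ext hz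
    rw [this]
    exact seg_wayBelow hn0 x ht.le ht' _
  refine ⟨?_, ?_, ?_, ?_⟩
  · -- nonempty: the uniform state is way below everything
    refine ⟨⟨seg n x.val 0, hsegstate 0 le_rfl (by norm_num)⟩, ?_⟩
    intro S hne _ _
    obtain ⟨s, hs⟩ := hne
    refine ⟨s, hs, ?_⟩
    show bayesLE (seg n x.val 0) s.val
    have : seg n x.val 0 = fun _ : Fin n => (1:ℝ)/n := by
      funext i; simp [seg]
    rw [this]
    exact bayesLE_const (by positivity) _
  · -- directedness
    intro y1 hy1 y2 hy2
    obtain ⟨z1, hz1C, hyz1⟩ := hy1 C hCne hCdir hClub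
    obtain ⟨z2, hz2C, hyz2⟩ := hy2 C hCne hCdir hClub
    obtain ⟨t1, ht1, ht1', hv1⟩ := hz1C
    obtain ⟨t2, ht2, ht2', hv2⟩ := hz2C
    set T := max t1 t2 with hT
    have hT1 : T < 1 := max_lt ht1' ht2'
    have hT0 : 0 < T := lt_max_of_lt_left ht1
    refine ⟨⟨seg n x.val T, hsegstate _ hT0.le hT1.le⟩,
      seg_wayBelow hn0 x hT0.le hT1 _, ?_, ?_⟩
    · show bayesLE y1.val _
      apply chain_trans hn0 ht1 (le_max_left _ _) hT1.le
      rw [← hv1]; exact hyz1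
    · show bayesLE y2.val _
      apply chain_trans hn0 ht2 (le_max_right _ _) hT1.le
      rw [← hv2]; exact hyz2
  · -- x is an upper bound of ⇓x
    intro y hy
    have hrefl : clLE x x := bayesLE_refl x.val
    obtain ⟨s, hs, hle⟩ := hy {x} ⟨x, rfl⟩
      (by
        intro a ha b hb
        rw [Set.mem_singleton_iff] at ha hb
        exact ⟨x, rfl, by rw [ha]; exact hrefl, by rw [hb]; exact hrefl⟩)
      ⟨by
        intro s hs
        rw [Set.mem_singleton_iff] at hs
        rw [hs]; exact hrefl, fun b hb => hb x rfl⟩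
    rw [Set.mem_singleton_iff] at hs
    rwa [hs] at hle
  · -- x is the least upper bound of ⇓x
    intro b hb
    show bayesLE x.val b.val
    apply lub_chain hn0 x.2 b.2
    intro k
    have hk := tk_mem k
    have hmem : (⟨seg n x.val (1 - 1/(k+2)), hsegstate _ hk.1.le hk.2.le⟩ : ClState n) ∈
        {y : ClState n | WayBelow clLE y x} :=
      seg_wayBelow hn0 x hk.1.le hk.2 _
    exact hb _ hmem
end

section
/- For every n ≥ 2 and x ∈ Δⁿ, the straight line path π(t) = (1−t)·⊥ + t·x from ⊥ := (1/n,…,1/n) to x is Scott continuous (monotone from [0,1] to (Δⁿ,⊑) and preserving suprema of directed subsets of [0,1]) and satisfies π(t) ≪ x for every t ∈ [0,1). -/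
/-- The straight line path π(t) = (1−t)·⊥ + t·x from ⊥ = (1/n,…,1/n) to x. -/
noncomputable def statePath {n : ℕ} (x : ClState n) (t : Set.Icc (0 : ℝ) 1) : ClState n :=
  ⟨fun i => (1 - t.val) * (n : ℝ)⁻¹ + t.val * x.val i, by
    have ht0 := t.prop.1
    have ht1 := t.prop.2
    rcases Nat.eq_zero_or_pos n with h | h
    · subst h
      exact absurd x.prop.2 (by simp)
    have hn : (0 : ℝ) < (n : ℝ) := by exact_mod_cast h
    constructor
    · intro i
      have hx := x.prop.1 i
      have hinv : (0 : ℝ) ≤ (n : ℝ)⁻¹ := by positivity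
      nlinarith
    · have hs : ∑ i, x.val i = 1 := x.prop.2
      rw [Finset.sum_add_distrib, ← Finset.mul_sum, ← Finset.mul_sum, hs,
        Finset.sum_const, Finset.card_univ, Fintype.card_fin, nsmul_eq_mul]
      field_simp
      ring⟩

def bayesC {n : ℕ} (x y : Fin n → ℝ) : Prop :=
  (∀ i j, y i < y j → x i ≤ x j) ∧ (∀ i j, y i ≤ y j → x j * y i ≤ x i * y j)

lemma bayes_chain {n : ℕ} {f g : Fin n → ℝ} (hf : Antitone f) (hg : Antitone g)
    (hf0 : ∀ i, 0 ≤ f i) (hg0 : ∀ i, 0 ≤ g i)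
    (hc : ∀ i j : Fin n, (i : ℕ) + 1 = (j : ℕ) → f i * g j ≤ f j * g i) :
    ∀ p q : Fin n, p ≤ q → f p * g q ≤ f q * g p := by
  suffices H : ∀ k : ℕ, ∀ q : Fin n, q.val = k → ∀ p : Fin n, p ≤ q → f p * g q ≤ f q * g p by
    intro p q hpq; exact H q.val q rfl p hpq
  intro k
  induction k with
  | zero =>
    intro q hq p hpq
    have : p = q := Fin.ext (by rw [Fin.le_def] at hpq; omega)
    rw [this]
  | succ m ih =>
    intro q hq p hpq
    rcases eq_or_lt_of_le hpq with h | h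
    · rw [h]
    · have hpm : p.val ≤ m := by rw [Fin.lt_def] at h; omega
      have hmn : m < n := by have := q.isLt; omega
      set q' : Fin n := ⟨m, hmn⟩ with hq'
      have hpq' : p ≤ q' := by rw [Fin.le_def]; exact hpm
      have hIH : f p * g q' ≤ f q' * g p := ih q' rfl p hpq'
      have hadj : f q' * g q ≤ f q * g q' := hc q' q (by simp [hq', hq])
      rcases eq_or_lt_of_le (hg0 q) with hgq | hgq
      · -- g q = 0
        have : f p * g q ≤ 0 := by rw [← hgq]; simp
        calc f p * g q ≤ 0 := this
          _ ≤ f q * g p := mul_nonneg (hf0 q) (hg0 p)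
      · -- 0 < g q
        have hgq' : 0 < g q' := lt_of_lt_of_le hgq (hg (by rw [Fin.le_def]; simp [hq', hq]))
        rcases eq_or_lt_of_le (hf0 q') with hfq' | hfq'
        · -- f q' = 0
          have hfp : f p = 0 := by
            have : f p * g q' ≤ 0 := by
              calc f p * g q' ≤ f q' * g p := hIH
                _ = 0 := by rw [← hfq']; ring
            nlinarith [hf0 p, hg0 q']
          rw [hfp]; simpa using mul_nonneg (hf0 q) (hg0 p)
        · -- 0 < f q'
          have hmul : (f p * g q) * (f q' * g q') ≤ (f q * g p) * (f q' * g q') := by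
            nlinarith [mul_le_mul hIH hadj (mul_nonneg (hf0 q') (hg0 q)) (mul_nonneg (hf0 q') (hg0 p)),
              mul_nonneg (hf0 p) (hg0 q'), mul_nonneg (hf0 q') (hg0 q)]
          have hpos : 0 < f q' * g q' := mul_pos hfq' hgq'
          exact le_of_mul_le_mul_right hmul hpos

lemma bayes_to_C {n : ℕ} {x y : Fin n → ℝ} (hx0 : ∀ i, 0 ≤ x i) (hy0 : ∀ i, 0 ≤ y i)
    (h : bayesLE x y) : bayesC x y := by
  obtain ⟨σ, hxa, hya, hc⟩ := h
  have H := bayes_chain hxa hya (fun i => hx0 _) (fun i => hy0 _) hc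
  constructor
  · intro i j hij
    have hlt : σ.symm j < σ.symm i := by
      by_contra hcon
      push_neg at hcon
      have := hya hcon
      simp at this
      exact absurd hij (not_lt.2 this)
    have := hxa hlt.le
    simpa using this
  · intro i j hij
    rcases eq_or_lt_of_le hij with he | hlt
    · rcases le_total (σ.symm i) (σ.symm j) with hs | hs
      · have := hxa hs
        simp at this
        calc x j * y i ≤ x i * y i := mul_le_mul_of_nonneg_right this (hy0 i)
          _ = x i * y j := by rw [he]
      · have := H (σ.symm j) (σ.symm i) hs
        simpa using this
    · have hlt' : σ.symm j < σ.symm i := by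
        by_contra hcon
        push_neg at hcon
        have := hya hcon
        simp at this
        exact absurd hlt (not_lt.2 this)
      have := H (σ.symm j) (σ.symm i) hlt'.le
      simpa using this

lemma C_to_bayes {n : ℕ} {x y : Fin n → ℝ} (h : bayesC x y) : bayesLE x y := by
  classical
  set key : Fin n → ℝ ×ₗ ℝ := fun i => toLex (-(y i), -(x i)) with hkey
  set σ : Equiv.Perm (Fin n) := Tuple.sort key with hσ
  have hmono : Monotone (key ∘ σ) := Tuple.monotone_sort key
  refine ⟨σ, ?_, ?_, ?_⟩
  · intro i j hij
    have := hmono hij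
    simp only [Function.comp, hkey, Prod.Lex.le_iff, ofLex_toLex] at this
    rcases this with h1 | ⟨h1, h2⟩
    · exact h.1 _ _ (by linarith)
    · simpa using h2
  · intro i j hij
    have := hmono hij
    simp only [Function.comp, hkey, Prod.Lex.le_iff, ofLex_toLex] at this
    rcases this with h1 | ⟨h1, h2⟩
    · simpa using h1.le
    · have : y (σ j) = y (σ i) := by linarith
      exact this.le
  · intro i j hij
    have hle : y (σ j) ≤ y (σ i) := by
      have := hmono (show i ≤ j by rw [Fin.le_def]; omega)
      simp only [Function.comp, hkey, Prod.Lex.le_iff, ofLex_toLex] at this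
      rcases this with h1 | ⟨h1, h2⟩
      · linarith
      · linarith
    exact h.2 _ _ hle

lemma clLE_refl {n : ℕ} (a : ClState n) : clLE a a :=
  C_to_bayes ⟨fun _ _ h => h.le, fun i j _ => by rw [mul_comm]⟩

/-- support lemma: for states, the support shrinks upwards. -/
lemma C_supp {n : ℕ} {y z : Fin n → ℝ} (hy0 : ∀ i, 0 ≤ y i) (hysum : ∑ i, y i = 1)
    (hz0 : ∀ i, 0 ≤ z i) (h : bayesC y z) {j : Fin n} (hzj : 0 < z j) : 0 < y j := by
  rcases eq_or_lt_of_le (hy0 j) with hyj | hyj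
  · exfalso
    have hall : ∀ i, y i = 0 := by
      intro i
      rcases lt_or_ge (z i) (z j) with hzi | hzi
      · have := h.1 i j hzi
        have := hy0 i
        linarith [hyj.symm ▸ this]
      · have := h.2 j i hzi
        rw [← hyj] at this
        simp at this
        nlinarith [hy0 i, hz0 i]
    rw [Finset.sum_congr rfl (fun i _ => hall i)] at hysum
    simp at hysum
  · exact hyj

lemma C_trans {n : ℕ} {a b c : Fin n → ℝ}
    (ha0 : ∀ i, 0 ≤ a i) (hb0 : ∀ i, 0 ≤ b i) (hc0 : ∀ i, 0 ≤ c i)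
    (hbsum : ∑ i, b i = 1)
    (hab : bayesC a b) (hbc : bayesC b c) : bayesC a c := by
  constructor
  · intro i j hij
    have hb : b i ≤ b j := hbc.1 i j hij
    rcases eq_or_lt_of_le hb with hbe | hbl
    · have hcj : 0 < c j := lt_of_le_of_lt (hc0 i) hij
      have hbj : 0 < b j := C_supp hb0 hbsum hc0 hbc hcj
      have h2 := hab.2 j i hbe.ge
      rw [hbe] at h2
      exact le_of_mul_le_mul_right h2 hbj
    · exact hab.1 i j hbl
  · intro i j hij
    rcases eq_or_lt_of_le (hc0 j) with hcj | hcj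
    · have hci : c i = 0 := le_antisymm (hij.trans hcj.ge) (hc0 i)
      rw [hci, ← hcj]
      simp
    · have hbj : 0 < b j := C_supp hb0 hbsum hc0 hbc hcj
      rcases le_or_gt (b i) (b j) with hb | hb
      · have h1 := hab.2 i j hb
        have h2 := hbc.2 i j hij
        rcases eq_or_lt_of_le (hb0 i) with hbi | hbi
        · have hci : c i = 0 := by
            rw [← hbi] at h2
            simp at h2
            nlinarith [hc0 i]
          rw [hci]
          simp
          exact mul_nonneg (ha0 i) (hc0 j)
        · nlinarith [mul_le_mul h1 h2 (mul_nonneg (hb0 j) (hc0 i)) (mul_nonneg (ha0 i) (hb0 j)),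
            mul_pos hbi hbj]
      · rcases eq_or_lt_of_le hij with hce | hcl
        · have h1 := hbc.2 i j hij
          have h2 := hbc.2 j i hce.ge
          rw [← hce] at h1 h2
          nlinarith [hcj, hce ▸ hcj]
        · exact absurd (hbc.1 i j hcl) (not_le.2 hb)

lemma C_antisymm_aux {n : ℕ} {a b : Fin n → ℝ}
    (hab : bayesC a b) (hba : bayesC b a) {i j : Fin n}
    (h : b i ≤ b j) : a j * b i = a i * b j := by
  have h1 : a j * b i ≤ a i * b j := hab.2 i j h
  rcases le_or_gt (a i) (a j) with ha | ha
  · have h2 := hba.2 i j ha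
    nlinarith
  · have hbe : b j ≤ b i := hba.1 j i ha
    have hbeq : b i = b j := le_antisymm h hbe
    have h3 : a i * b j ≤ a j * b i := by
      have := hab.2 j i hbe
      rw [hbeq] at this ⊢
      rw [hbeq] at h1
      linarith
    linarith

lemma C_antisymm {n : ℕ} {a b : Fin n → ℝ}
    (hasum : ∑ i, a i = 1) (hbsum : ∑ i, b i = 1)
    (hab : bayesC a b) (hba : bayesC b a) : a = b := by
  have key : ∀ i j, a i * b j = a j * b i := by
    intro i j
    rcases le_total (b i) (b j) with h | h
    · exact (C_antisymm_aux hab hba h).symm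
    · exact C_antisymm_aux hab hba h
  funext i
  have : a i * (∑ j, b j) = (∑ j, a j) * b i := by
    rw [Finset.mul_sum, Finset.sum_mul]
    exact Finset.sum_congr rfl (fun j _ => key i j)
  rw [hasum, hbsum] at this
  simpa using this

lemma clLE_trans {n : ℕ} {a b c : ClState n} (hab : clLE a b) (hbc : clLE b c) : clLE a c :=
  C_to_bayes (C_trans a.prop.1 b.prop.1 c.prop.1 b.prop.2
    (bayes_to_C a.prop.1 b.prop.1 hab) (bayes_to_C b.prop.1 c.prop.1 hbc))

lemma clLE_antisymm {n : ℕ} {a b : ClState n} (hab : clLE a b) (hba : clLE b a) : a = b :=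
  Subtype.ext (C_antisymm a.prop.2 b.prop.2
    (bayes_to_C a.prop.1 b.prop.1 hab) (bayes_to_C b.prop.1 a.prop.1 hba))

/-- closedness of the Bayesian relation along continuous families -/
lemma isClosed_bayes {n : ℕ} {α : Type*} [TopologicalSpace α] (f g : α → Fin n → ℝ)
    (hf : ∀ i, Continuous (fun a => f a i)) (hg : ∀ i, Continuous (fun a => g a i)) :
    IsClosed {a | bayesLE (f a) (g a)} := by
  have : {a | bayesLE (f a) (g a)} =
      ⋃ σ : Equiv.Perm (Fin n),
        ((⋂ i : Fin n, ⋂ j : Fin n, {a | i ≤ j → f a (σ j) ≤ f a (σ i)}) ∩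
         (⋂ i : Fin n, ⋂ j : Fin n, {a | i ≤ j → g a (σ j) ≤ g a (σ i)}) ∩
         (⋂ i : Fin n, ⋂ j : Fin n, {a | (i : ℕ) + 1 = (j : ℕ) →
            f a (σ i) * g a (σ j) ≤ f a (σ j) * g a (σ i)})) := by
    ext a
    simp only [Set.mem_setOf_eq, Set.mem_iUnion, Set.mem_inter_iff, Set.mem_iInter, bayesLE]
    constructor
    · rintro ⟨σ, h1, h2, h3⟩
      exact ⟨σ, ⟨fun i j hij => h1 hij, fun i j hij => h2 hij⟩, h3⟩
    · rintro ⟨σ, ⟨h1, h2⟩, h3⟩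
      exact ⟨σ, fun i j hij => h1 i j hij, fun i j hij => h2 i j hij, h3⟩
  rw [this]
  apply isClosed_iUnion_of_finite
  intro σ
  refine IsClosed.inter (IsClosed.inter ?_ ?_) ?_
  · refine isClosed_iInter fun i => isClosed_iInter fun j => ?_
    by_cases hij : i ≤ j
    · have he : {a | i ≤ j → f a (σ j) ≤ f a (σ i)} = {a | f a (σ j) ≤ f a (σ i)} := by
        ext a; simp [hij]
      rw [he]; exact isClosed_le (hf _) (hf _)
    · have he : {a | i ≤ j → f a (σ j) ≤ f a (σ i)} = Set.univ := by
        ext a; simp [hij]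
      rw [he]; exact isClosed_univ
  · refine isClosed_iInter fun i => isClosed_iInter fun j => ?_
    by_cases hij : i ≤ j
    · have he : {a | i ≤ j → g a (σ j) ≤ g a (σ i)} = {a | g a (σ j) ≤ g a (σ i)} := by
        ext a; simp [hij]
      rw [he]; exact isClosed_le (hg _) (hg _)
    · have he : {a | i ≤ j → g a (σ j) ≤ g a (σ i)} = Set.univ := by
        ext a; simp [hij]
      rw [he]; exact isClosed_univ
  · refine isClosed_iInter fun i => isClosed_iInter fun j => ?_
    by_cases hij : (i : ℕ) + 1 = (j : ℕ)
    · have he : {a | (i : ℕ) + 1 = (j : ℕ) →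
          f a (σ i) * g a (σ j) ≤ f a (σ j) * g a (σ i)} =
          {a | f a (σ i) * g a (σ j) ≤ f a (σ j) * g a (σ i)} := by
        ext a; simp [hij]
      rw [he]; exact isClosed_le ((hf _).mul (hg _)) ((hf _).mul (hg _))
    · have he : {a | (i : ℕ) + 1 = (j : ℕ) →
          f a (σ i) * g a (σ j) ≤ f a (σ j) * g a (σ i)} = Set.univ := by
        ext a; simp [hij]
      rw [he]; exact isClosed_univ

lemma ClState.le_one {n : ℕ} (x : ClState n) (i : Fin n) : x.val i ≤ 1 := by
  have h := x.prop.2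
  have := Finset.single_le_sum (f := x.val) (fun j _ => x.prop.1 j) (Finset.mem_univ i)
  linarith

/-- a permutation sorting x decreasingly -/
lemma exists_sort {n : ℕ} (x : Fin n → ℝ) : ∃ σ : Equiv.Perm (Fin n),
    Antitone (fun i => x (σ i)) := by
  refine ⟨Tuple.sort (fun i => -x i), fun i j hij => ?_⟩
  have := Tuple.monotone_sort (fun i => -x i) hij
  simpa using this

lemma statePath_mono {n : ℕ} (x : ClState n) (s t : Set.Icc (0 : ℝ) 1) (hst : s ≤ t) :
    clLE (statePath x s) (statePath x t) := by
  obtain ⟨σ, hσ⟩ := exists_sort x.val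
  have hs0 : (0:ℝ) ≤ s.val := s.prop.1
  have ht0 : (0:ℝ) ≤ t.val := t.prop.1
  have hst' : s.val ≤ t.val := hst
  have hc : (0:ℝ) ≤ (n : ℝ)⁻¹ := by positivity
  refine ⟨σ, ?_, ?_, ?_⟩
  · intro i j hij
    have := hσ hij
    simp only [statePath]
    nlinarith [mul_le_mul_of_nonneg_left this hs0]
  · intro i j hij
    have := hσ hij
    simp only [statePath]
    nlinarith [mul_le_mul_of_nonneg_left this ht0]
  · intro i j hij
    have hab : x.val (σ j) ≤ x.val (σ i) := hσ (by rw [Fin.le_def]; omega)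
    simp only [statePath]
    nlinarith [mul_nonneg (mul_nonneg hc (sub_nonneg.2 hab)) (sub_nonneg.2 hst')]

lemma isLUB_val {S : Set (Set.Icc (0:ℝ) 1)} {u : Set.Icc (0:ℝ) 1}
    (hS : S.Nonempty) (h : IsLUB S u) : IsLUB (Subtype.val '' S) u.val := by
  constructor
  · rintro _ ⟨s, hs, rfl⟩
    exact Subtype.coe_le_coe.2 (h.1 hs)
  · intro b hb
    obtain ⟨s0, hs0⟩ := hS
    have hb0 : (0:ℝ) ≤ b := le_trans s0.prop.1 (hb ⟨s0, hs0, rfl⟩)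
    set b' : Set.Icc (0:ℝ) 1 := ⟨min b 1, ⟨le_min hb0 zero_le_one, min_le_right _ _⟩⟩ with hb'
    have : u ≤ b' := h.2 (fun s hs => by
      rw [← Subtype.coe_le_coe]
      exact le_min (hb ⟨s, hs, rfl⟩) s.prop.2)
    calc u.val ≤ min b 1 := this
      _ ≤ b := min_le_left _ _

lemma statePath_sup {n : ℕ} (x : ClState n) (S : Set (Set.Icc (0 : ℝ) 1))
    (hne : S.Nonempty) (u : Set.Icc (0 : ℝ) 1) (hu : IsLUB S u) :
    IsLub' clLE (statePath x '' S) (statePath x u) := by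
  constructor
  · rintro _ ⟨s, hs, rfl⟩
    exact statePath_mono x s u (hu.1 hs)
  · intro b hb
    have hmem : u.val ∈ closure (Subtype.val '' S) :=
      (isLUB_val hne hu).mem_closure (hne.image _)
    have hclosed : IsClosed {r : ℝ |
        bayesLE (fun i => (1 - r) * (n : ℝ)⁻¹ + r * x.val i) b.val} := by
      apply isClosed_bayes (g := fun _ => b.val)
      · intro i; fun_prop
      · intro i; exact continuous_const
    have hsub : Subtype.val '' S ⊆ {r : ℝ |
        bayesLE (fun i => (1 - r) * (n : ℝ)⁻¹ + r * x.val i) b.val} := by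
      rintro _ ⟨s, hs, rfl⟩
      exact hb _ ⟨s, hs, rfl⟩
    have := closure_minimal hsub hclosed hmem
    exact this

lemma lub_mem_closure {n : ℕ} (S : Set (ClState n)) (hne : S.Nonempty)
    (hdir : DirectedOn clLE S) (x : ClState n)
    (hub : ∀ s ∈ S, clLE s x) (hleast : ∀ b, (∀ s ∈ S, clLE s b) → clLE x b) :
    x.val ∈ closure (Subtype.val '' S) := by
  classical
  haveI : Nonempty S := hne.to_subtype
  set Z : S → Set (Fin n → ℝ) :=
    fun s => closure (Subtype.val '' {r | r ∈ S ∧ clLE s.val r}) with hZ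
  have hKc : IsCompact (Set.pi Set.univ (fun _ : Fin n => Set.Icc (0:ℝ) 1)) :=
    isCompact_univ_pi (fun _ => isCompact_Icc)
  have hZsubK : ∀ s : S, Z s ⊆ Set.pi Set.univ (fun _ : Fin n => Set.Icc (0:ℝ) 1) := by
    intro s
    apply closure_minimal _ (hKc.isClosed)
    rintro _ ⟨r, hr, rfl⟩ i _
    exact ⟨r.prop.1 i, ClState.le_one r i⟩
  have hZclosed : ∀ s : S, IsClosed (Z s) := fun s => isClosed_closure
  have hZcompact : ∀ s : S, IsCompact (Z s) :=
    fun s => hKc.of_isClosed_subset (hZclosed s) (hZsubK s)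
  have hZne : ∀ s : S, (Z s).Nonempty :=
    fun s => ⟨s.val.val, subset_closure ⟨s.val, ⟨s.prop, clLE_refl _⟩, rfl⟩⟩
  have hZdir : Directed (· ⊇ ·) Z := by
    intro s1 s2
    obtain ⟨s3, hs3S, h13, h23⟩ := hdir s1.val s1.prop s2.val s2.prop
    refine ⟨⟨s3, hs3S⟩, ?_, ?_⟩
    · exact closure_mono (Set.image_mono  (fun r hr => ⟨hr.1, clLE_trans h13 hr.2⟩))
    · exact closure_mono (Set.image_mono  (fun r hr => ⟨hr.1, clLE_trans h23 hr.2⟩))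
  obtain ⟨z, hz⟩ := IsCompact.nonempty_iInter_of_directed_nonempty_isCompact_isClosed
    Z hZdir hZne hZcompact hZclosed
  simp only [Set.mem_iInter] at hz
  -- z is a classical state
  obtain ⟨s0, hs0⟩ := hne
  have hzsum : ∑ i, z i = 1 := by
    have hcl : IsClosed {w : Fin n → ℝ | ∑ i, w i = 1} :=
      isClosed_eq (by fun_prop) continuous_const
    have := closure_minimal (s := Subtype.val '' {r | r ∈ S ∧ clLE s0 r})
      (by rintro _ ⟨r, hr, rfl⟩; exact r.prop.2) hcl
    exact this (hz ⟨s0, hs0⟩)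
  have hz0 : ∀ i, 0 ≤ z i := fun i => (hZsubK ⟨s0, hs0⟩ (hz ⟨s0, hs0⟩) i (Set.mem_univ i)).1
  set zz : ClState n := ⟨z, hz0, hzsum⟩ with hzz
  -- z is an upper bound of S
  have hupper : ∀ s ∈ S, clLE s zz := by
    intro s hs
    have hcl : IsClosed {w : Fin n → ℝ | bayesLE s.val w} :=
      isClosed_bayes (fun _ => s.val) id (fun i => continuous_const) (fun i => continuous_apply i)
    have := closure_minimal (s := Subtype.val '' {r | r ∈ S ∧ clLE s r})
      (by rintro _ ⟨r, hr, rfl⟩; exact hr.2) hcl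
    exact this (hz ⟨s, hs⟩)
  -- z is below x
  have hzx : clLE zz x := by
    have hcl : IsClosed {w : Fin n → ℝ | bayesLE w x.val} :=
      isClosed_bayes id (fun _ => x.val) (fun i => continuous_apply i) (fun i => continuous_const)
    have hsub : Subtype.val '' {r | r ∈ S ∧ clLE s0 r} ⊆ {w | bayesLE w x.val} := by
      rintro _ ⟨r, hr, rfl⟩
      exact hub r hr.1
    exact closure_minimal hsub hcl (hz ⟨s0, hs0⟩)
  have hxz : clLE x zz := hleast zz hupper
  have : x = zz := clLE_antisymm hxz hzx
  rw [this]
  exact closure_mono (Set.image_mono  (fun r hr => hr.1)) (hz ⟨s0, hs0⟩)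



lemma exists_gap {n : ℕ} (x : Fin n → ℝ) :
    ∃ δ : ℝ, 0 < δ ∧ ∀ i j : Fin n, x j < x i → δ ≤ x i - x j := by
  classical
  set D : Finset ℝ := Finset.image (fun p : Fin n × Fin n => x p.1 - x p.2)
    (Finset.univ.filter (fun p : Fin n × Fin n => x p.2 < x p.1)) with hD
  have hall : ∀ r ∈ D, 0 < r := by
    intro r hr
    rw [hD, Finset.mem_image] at hr
    obtain ⟨p, hp, hv⟩ := hr
    rw [Finset.mem_filter] at hp
    rw [← hv]
    linarith [hp.2]
  by_cases h : D.Nonempty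
  · refine ⟨D.min' h, hall _ (Finset.min'_mem _ _), ?_⟩
    intro i j hij
    apply Finset.min'_le
    rw [hD, Finset.mem_image]
    exact ⟨(i, j), Finset.mem_filter.2 ⟨Finset.mem_univ _, hij⟩, rfl⟩
  · refine ⟨1, one_pos, ?_⟩
    intro i j hij
    exfalso
    apply h
    refine ⟨x i - x j, ?_⟩
    rw [hD, Finset.mem_image]
    exact ⟨(i, j), Finset.mem_filter.2 ⟨Finset.mem_univ _, hij⟩, rfl⟩

set_option maxHeartbeats 1000000 in
lemma statePath_wayBelow {n : ℕ} (hn : 2 ≤ n) (x : ClState n)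
    (t : Set.Icc (0 : ℝ) 1) (ht : t.val < 1) :
    WayBelow clLE (statePath x t) x := by
  classical
  intro S hne hdir hlub
  have hmem := lub_mem_closure S hne hdir x hlub.1 hlub.2
  have hnpos : (0:ℝ) < n := by exact_mod_cast (by omega : 0 < n)
  set c : ℝ := (n : ℝ)⁻¹ with hc
  have hcpos : 0 < c := by rw [hc]; exact inv_pos.2 hnpos
  obtain ⟨δ, hδpos, hδle⟩ := exists_gap x.val
  have ht0 : (0:ℝ) ≤ t.val := t.prop.1
  have ht1 : (0:ℝ) < 1 - t.val := by linarith
  obtain ⟨ε, hεpos, hε1, hε2⟩ :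
      ∃ ε : ℝ, 0 < ε ∧ ε ≤ δ/4 ∧ ε ≤ (1 - t.val) * c * δ / 4 :=
    by
      rcases le_total (δ/4) ((1 - t.val) * c * δ / 4) with h | h
      · exact ⟨δ/4, by linarith, le_refl _, h⟩
      · have := mul_pos (mul_pos ht1 hcpos) hδpos
        exact ⟨(1 - t.val) * c * δ / 4, by linarith, h, le_refl _⟩
  obtain ⟨w, hw, hdist⟩ := Metric.mem_closure_iff.mp hmem ε hεpos
  obtain ⟨s, hsS, rfl⟩ := hw
  refine ⟨s, hsS, ?_⟩
  obtain ⟨σ, hsa, hxa, hcross⟩ := hlub.1 s hsS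
  refine ⟨σ, ?_, hsa, ?_⟩
  · intro i j hij
    have := hxa hij
    simp only [statePath]
    nlinarith [mul_le_mul_of_nonneg_left this ht0]
  · intro i j hij
    have hij' : i ≤ j := by rw [Fin.le_def]; omega
    have hsp : ∀ k : Fin n, (statePath x t).val k = (1 - t.val) * c + t.val * x.val k :=
      fun k => rfl
    rw [hsp (σ i), hsp (σ j)]
    set a : ℝ := x.val (σ i) with ha
    set b : ℝ := x.val (σ j) with hb
    set p : ℝ := s.val (σ i) with hp
    set q : ℝ := s.val (σ j) with hq
    have hab : b ≤ a := hxa hij'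
    have hpq : q ≤ p := hsa hij'
    have hpb : p * b ≤ q * a := hcross i j hij
    have ha0 : 0 ≤ a := x.prop.1 _
    have hb0 : 0 ≤ b := x.prop.1 _
    have hp0 : 0 ≤ p := s.prop.1 _
    have hq0 : 0 ≤ q := s.prop.1 _
    have ha1 : a ≤ 1 := ClState.le_one x _
    have hb1 : b ≤ 1 := ClState.le_one x _
    have hdi : |a - p| < ε := by
      have := dist_le_pi_dist x.val s.val (σ i)
      rw [Real.dist_eq] at this
      exact lt_of_le_of_lt this hdist
    have hdj : |b - q| < ε := by
      have := dist_le_pi_dist x.val s.val (σ j)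
      rw [Real.dist_eq] at this
      exact lt_of_le_of_lt this hdist
    rw [abs_lt] at hdi hdj
    rcases eq_or_lt_of_le hab with he | hlt
    · rw [he]
      have hF : 0 ≤ (1 - t.val) * c + t.val * a :=
        add_nonneg (mul_nonneg ht1.le hcpos.le) (mul_nonneg ht0 ha0)
      exact mul_le_mul_of_nonneg_left hpq hF
    · have hδab : δ ≤ a - b := hδle (σ i) (σ j) hlt
      have h1 : a * q - b * p ≤ 2 * ε := by
        nlinarith [mul_le_mul_of_nonneg_left (show q - b ≤ ε by linarith) ha0,
          mul_le_mul_of_nonneg_left (show a - p ≤ ε by linarith) hb0,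
          mul_le_mul_of_nonneg_right ha1 hεpos.le,
          mul_le_mul_of_nonneg_right hb1 hεpos.le]
      have h2 : δ - 2 * ε ≤ p - q := by linarith
      have m0 : 0 ≤ (1 - t.val) * c := mul_nonneg ht1.le hcpos.le
      have g1 : t.val * (a * q - b * p) ≤ 2 * ε := by
        nlinarith [mul_le_mul_of_nonneg_left h1 ht0, ht.le, hεpos.le]
      have g2 : 2 * ε ≤ (1 - t.val) * c * (p - q) := by
        have s1 : (1 - t.val) * c * (δ - 2 * ε) ≤ (1 - t.val) * c * (p - q) :=
          mul_le_mul_of_nonneg_left h2 m0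
        have s2 : (1 - t.val) * c * (δ / 2) ≤ (1 - t.val) * c * (δ - 2 * ε) :=
          mul_le_mul_of_nonneg_left (by linarith) m0
        ring_nf at hε2 s1 s2 ⊢
        linarith
      ring_nf at g1 g2 ⊢
      linarith

/-- The straight line path from ⊥ to x is Scott continuous and approximates x:
it is monotone, preserves suprema of directed subsets of [0,1], and
π(t) ≪ x for all t < 1. -/
theorem straight_line_path_approximates (n : ℕ) (hn : 2 ≤ n) (x : ClState n) :
    (∀ s t : Set.Icc (0 : ℝ) 1, s ≤ t → clLE (statePath x s) (statePath x t)) ∧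
    (∀ S : Set (Set.Icc (0 : ℝ) 1), S.Nonempty → DirectedOn (· ≤ ·) S →
      ∀ u : Set.Icc (0 : ℝ) 1, IsLUB S u →
        IsLub' clLE (statePath x '' S) (statePath x u)) ∧
    (∀ t : Set.Icc (0 : ℝ) 1, t.val < 1 → WayBelow clLE (statePath x t) x) := by
  refine ⟨fun s t hst => statePath_mono x s t hst,
    fun S hne hdir u hu => statePath_sup x S hne u hu,
    fun t ht => statePath_wayBelow hn x t ht⟩
end

section
/- Let D be a dcpo and μ : D → [0,∞)* a Scott continuous map that measures the content of every x ∈ ker μ. Then every x ∈ ker μ is a maximal element of D. -/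
/-- `U` is Scott open: an upper set inaccessible by directed suprema. -/
def ScottOpen {α : Type*} (le : α → α → Prop) (U : Set α) : Prop :=
  (∀ x ∈ U, ∀ y, le x y → y ∈ U) ∧
  ∀ S : Set α, S.Nonempty → DirectedOn le S →
    ∀ a, IsLub' le S a → a ∈ U → (S ∩ U).Nonempty

/-- `μ` (valued in [0,∞)*) measures the content of `y`. -/
def MeasuresContentAt {α : Type*} (le : α → α → Prop) (μ : α → ℝ) (y : α) : Prop :=
  ∀ U : Set α, ScottOpen le U → y ∈ U →
    ∃ ε > (0 : ℝ), {z | le z y ∧ μ z < μ y + ε} ⊆ U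

/-- If a Scott continuous μ : D → [0,∞)* measures the content of every element of
its kernel, then every element of its kernel is maximal. -/
theorem kernel_of_measurement_is_maximal {D : Type*} (le : D → D → Prop)
    (hrefl : ∀ x, le x x)
    (hantisymm : ∀ x y, le x y → le y x → x = y)
    (htrans : ∀ x y z, le x y → le y z → le x z)
    (hdcpo : ∀ S : Set D, S.Nonempty → DirectedOn le S → ∃ a, IsLub' le S a)
    (μ : D → ℝ) (hpos : ∀ x, 0 ≤ μ x)
    (hmono : ∀ x y, le x y → μ y ≤ μ x)
    (hcont : ∀ S : Set D, S.Nonempty → DirectedOn le S →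
      ∀ a, IsLub' le S a → μ a = sInf (μ '' S))
    (hmeas : ∀ x, μ x = 0 → MeasuresContentAt le μ x) :
    ∀ x, μ x = 0 → ∀ y, le x y → y = x := by
  intro x hx y hxy
  by_contra hne
  -- μ y = 0
  have hy0 : μ y = 0 := le_antisymm (hx ▸ hmono x y hxy) (hpos y)
  -- U = complement of ↓x is Scott open
  set U : Set D := {z | ¬ le z x} with hU
  have hopen : ScottOpen le U := by
    constructor
    · intro a ha b hab hbx
      exact ha (htrans a b x hab hbx)
    · intro S hSne hSdir a ha haU
      by_contra hempty
      apply haU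
      apply ha.2
      intro s hs
      by_contra hsx
      exact hempty ⟨s, hs, hsx⟩
  have hyU : y ∈ U := fun hyx => hne (hantisymm x y hxy hyx).symm
  obtain ⟨ε, hε, hsub⟩ := hmeas y hy0 U hopen hyU
  have : x ∈ U := hsub ⟨hxy, by rw [hx, hy0]; linarith⟩
  exact this (hrefl x)
end

section
/- Let D be a dcpo and μ : D → [0,∞)* a Scott continuous map. If μ measures the content of y ∈ D, then μ is strictly monotone at y: for every x ∈ D with x ⊑ y and μx = μy, one has x = y. -/
/-- If a Scott continuous μ : D → [0,∞)* measures the content of y, then μ is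
strictly monotone at y. -/
theorem measurement_strictly_monotone {D : Type*} (le : D → D → Prop)
    (hrefl : ∀ x, le x x)
    (hantisymm : ∀ x y, le x y → le y x → x = y)
    (htrans : ∀ x y z, le x y → le y z → le x z)
    (hdcpo : ∀ S : Set D, S.Nonempty → DirectedOn le S → ∃ a, IsLub' le S a)
    (μ : D → ℝ) (hpos : ∀ x, 0 ≤ μ x)
    (hmono : ∀ x y, le x y → μ y ≤ μ x)
    (hcont : ∀ S : Set D, S.Nonempty → DirectedOn le S →
      ∀ a, IsLub' le S a → μ a = sInf (μ '' S))
    (y : D) (hmeas : MeasuresContentAt le μ y) :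
    ∀ x, le x y → μ x = μ y → x = y := by
  intro x hxy hμ
  by_contra hne
  have hU : ScottOpen le {z | ¬ le z x} := by
    constructor
    · intro a ha b hab hb
      exact ha (htrans a b x hab hb)
    · intro S hS hdir a ha haU
      by_contra h
      exact haU (ha.2 x (fun s hs => not_not.mp fun hs' => h ⟨s, hs, hs'⟩))
  have hyU : y ∈ {z | ¬ le z x} := fun hyx => hne (hantisymm x y hxy hyx)
  obtain ⟨ε, hε, hsub⟩ := hmeas _ hU hyU
  exact hsub ⟨hxy, by linarith⟩ (hrefl x)
end

section
/- Let X be a compact Hausdorff space and UX := {K ⊆ X : K nonempty and compact} ordered by reverse inclusion (A ⊑ B iff B ⊆ A). Then (UX, ⊑) is a dcpo in which the supremum of a directed set S is ∩S, its maximal elements are exactly the singletons {x}, and the map x ↦ {x} is a homeomorphism from X onto max(UX) equipped with the relative Scott topology inherited from UX. -/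
set_option linter.unusedSectionVars false

/-- The upper space UX of a space X: nonempty compact subsets. -/
def UpperSpace (X : Type*) [TopologicalSpace X] :=
  {K : Set X // K.Nonempty ∧ IsCompact K}

/-- The order of reverse inclusion on UX. -/
def upLE {X : Type*} [TopologicalSpace X] (A B : UpperSpace X) : Prop :=
  B.val ⊆ A.val

/-- The map x ↦ {x} from X into its upper space. -/
def singletonMap {X : Type*} [TopologicalSpace X] (x : X) : UpperSpace X :=
  ⟨{x}, Set.singleton_nonempty x, isCompact_singleton⟩

section Aux

variable {X : Type*} [TopologicalSpace X] [CompactSpace X] [T2Space X]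

lemma myAux_inter_mem (S : Set (UpperSpace X)) (hS : S.Nonempty) (hdir : DirectedOn upLE S) :
    (⋂ A ∈ S, A.val).Nonempty ∧ IsCompact (⋂ A ∈ S, A.val) := by
  have hι : Nonempty S := hS.to_subtype
  have hd : Directed (· ⊇ ·) (fun A : S => (A : UpperSpace X).val) := by
    rintro ⟨a, ha⟩ ⟨b, hb⟩
    obtain ⟨c, hc, h1, h2⟩ := hdir a ha b hb
    exact ⟨⟨c, hc⟩, h1, h2⟩
  have hcl : ∀ A : S, IsClosed (A : UpperSpace X).val := fun A => A.1.2.2.isClosed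
  have hne : (⋂ A : S, (A : UpperSpace X).val).Nonempty :=
    IsCompact.nonempty_iInter_of_directed_nonempty_isCompact_isClosed _ hd
      (fun A => A.1.2.1) (fun A => A.1.2.2) hcl
  rw [Set.biInter_eq_iInter]
  exact ⟨hne, (isClosed_iInter hcl).isCompact⟩

lemma myAux_sup (S : Set (UpperSpace X)) (hS : S.Nonempty) (hdir : DirectedOn upLE S) :
    ∃ z : UpperSpace X, z.val = ⋂ A ∈ S, A.val ∧ IsLub' upLE S z := by
  obtain ⟨hne, hcpt⟩ := myAux_inter_mem S hS hdir
  refine ⟨⟨⋂ A ∈ S, A.val, hne, hcpt⟩, rfl, ?_, ?_⟩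
  · intro s hs
    exact Set.biInter_subset_of_mem hs
  · intro b hb
    exact Set.subset_iInter₂ fun A hA => hb A hA

lemma myAux_lub_val (S : Set (UpperSpace X)) (hS : S.Nonempty) (hdir : DirectedOn upLE S)
    {a : UpperSpace X} (ha : IsLub' upLE S a) : a.val = ⋂ A ∈ S, A.val := by
  obtain ⟨z, hz, hlub⟩ := myAux_sup S hS hdir
  have h1 : upLE a z := ha.2 z hlub.1
  have h2 : upLE z a := hlub.2 a ha.1
  rw [← hz]
  exact Subtype.ext_iff.mp (Subtype.ext (Set.Subset.antisymm h2 h1) : a = z) ▸ rfl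

lemma myAux_max_iff (A : UpperSpace X) :
    (∀ B, upLE A B → B = A) ↔ ∃ x : X, A.val = {x} := by
  constructor
  · intro h
    obtain ⟨x, hx⟩ := A.2.1
    have : upLE A (singletonMap x) := Set.singleton_subset_iff.mpr hx
    obtain rfl := h _ this
    exact ⟨x, rfl⟩
  · rintro ⟨x, hx⟩ B hB
    apply Subtype.ext
    rw [hx]
    have hBsub : B.val ⊆ {x} := hx ▸ hB
    obtain ⟨y, hy⟩ := B.2.1
    have hyx : y = x := hBsub hy
    exact Set.Subset.antisymm hBsub (Set.singleton_subset_iff.mpr (hyx ▸ hy))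

/-- directed family of compacts whose intersection lies in an open set: some member does -/
lemma myAux_shrink (S : Set (UpperSpace X)) (hS : S.Nonempty) (hdir : DirectedOn upLE S)
    (V : Set X) (hV : IsOpen V) (h : (⋂ A ∈ S, A.val) ⊆ V) :
    ∃ A ∈ S, A.val ⊆ V := by
  by_contra hcon
  push_neg at hcon
  have hι : Nonempty S := hS.to_subtype
  set t : S → Set X := fun A => (A : UpperSpace X).val ∩ Vᶜ with ht
  have hd : Directed (· ⊇ ·) t := by
    rintro ⟨a, ha⟩ ⟨b, hb⟩
    obtain ⟨c, hc, h1, h2⟩ := hdir a ha b hb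
    exact ⟨⟨c, hc⟩, Set.inter_subset_inter_left _ h1, Set.inter_subset_inter_left _ h2⟩
  have hcl : ∀ A : S, IsClosed (t A) :=
    fun A => A.1.2.2.isClosed.inter hV.isClosed_compl
  have hne : ∀ A : S, (t A).Nonempty := by
    rintro ⟨a, ha⟩
    obtain ⟨x, hx, hxv⟩ := Set.not_subset.mp (hcon a ha)
    exact ⟨x, hx, hxv⟩
  have := IsCompact.nonempty_iInter_of_directed_nonempty_isCompact_isClosed t hd hne
    (fun A => (hcl A).isCompact) hcl
  obtain ⟨x, hx⟩ := this
  have hx1 : x ∈ ⋂ A ∈ S, A.val := by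
    rw [Set.biInter_eq_iInter]
    exact Set.mem_iInter.mpr fun A => (Set.mem_iInter.mp hx A).1
  exact (Set.mem_iInter.mp hx hι.some).2 (h hx1)

/-- closed neighborhoods of x, as elements of the upper space -/
lemma myAux_nbhd (x : X) :
    let S : Set (UpperSpace X) := {K | IsClosed K.val ∧ K.val ∈ nhds x}
    S.Nonempty ∧ DirectedOn upLE S ∧ IsLub' upLE S (singletonMap x) := by
  intro S
  have hmem : ∀ K ∈ S, x ∈ K.val := fun K hK => mem_of_mem_nhds hK.2
  have huniv : (⟨Set.univ, ⟨x, Set.mem_univ x⟩, isCompact_univ⟩ : UpperSpace X) ∈ S :=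
    ⟨isClosed_univ, Filter.univ_mem⟩
  refine ⟨⟨_, huniv⟩, ?_, ?_, ?_⟩
  · rintro a ha b hb
    refine ⟨⟨a.val ∩ b.val, ⟨x, hmem a ha, hmem b hb⟩,
      (ha.1.inter hb.1).isCompact⟩, ⟨ha.1.inter hb.1, Filter.inter_mem ha.2 hb.2⟩,
      Set.inter_subset_left, Set.inter_subset_right⟩
  · intro s hs
    exact Set.singleton_subset_iff.mpr (hmem s hs)
  · intro b hb
    -- b.val ⊆ every closed nbhd of x; show b.val ⊆ {x}
    intro y hy
    by_contra hyx
    have hyx' : y ≠ x := fun h => hyx (h ▸ rfl)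
    obtain ⟨u, v, hu, hv, hxu, hyv, huv⟩ := t2_separation hyx'.symm
    have hK : (⟨vᶜ, ⟨x, fun hc => Set.disjoint_left.mp huv hxu hc⟩,
        hv.isClosed_compl.isCompact⟩ : UpperSpace X) ∈ S := by
      refine ⟨hv.isClosed_compl, ?_⟩
      exact Filter.mem_of_superset (hu.mem_nhds hxu)
        (fun z hz hzv => Set.disjoint_left.mp huv hz hzv)
    exact (hb _ hK hy) hyv

end Aux

/-- For X compact Hausdorff, (UX, ⊑) is a dcpo... -/
theorem upper_space_dcpo_max_homeomorph (X : Type*) [TopologicalSpace X]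
    [CompactSpace X] [T2Space X] :
    (∀ A : UpperSpace X, upLE A A) ∧
    (∀ A B : UpperSpace X, upLE A B → upLE B A → A = B) ∧
    (∀ A B C : UpperSpace X, upLE A B → upLE B C → upLE A C) ∧
    (∀ S : Set (UpperSpace X), S.Nonempty → DirectedOn upLE S →
      ∃ z : UpperSpace X, z.val = ⋂ A ∈ S, A.val ∧ IsLub' upLE S z) ∧
    ({A : UpperSpace X | ∀ B, upLE A B → B = A} =
      {A : UpperSpace X | ∃ x : X, A.val = {x}}) ∧
    (Function.Injective (singletonMap (X := X)) ∧
      Set.range (singletonMap (X := X)) = {A : UpperSpace X | ∀ B, upLE A B → B = A} ∧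
      (∀ U : Set (UpperSpace X), ScottOpen upLE U →
        IsOpen (singletonMap (X := X) ⁻¹' U)) ∧
      (∀ V : Set X, IsOpen V →
        ∃ U : Set (UpperSpace X), ScottOpen upLE U ∧
          singletonMap (X := X) '' V =
            U ∩ {A : UpperSpace X | ∀ B, upLE A B → B = A})) := by
  refine ⟨fun A => subset_rfl,
    fun A B h1 h2 => Subtype.ext (Set.Subset.antisymm h2 h1),
    fun A B C h1 h2 => h2.trans h1,
    myAux_sup,
    Set.ext fun A => myAux_max_iff A,
    ?_, ?_, ?_, ?_⟩
  · intro x y h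
    have : ({x} : Set X) = {y} := Subtype.ext_iff.mp h
    exact Set.singleton_eq_singleton_iff.mp this
  · ext A
    simp only [Set.mem_range, Set.mem_setOf_eq, myAux_max_iff]
    constructor
    · rintro ⟨x, rfl⟩; exact ⟨x, rfl⟩
    · rintro ⟨x, hx⟩; exact ⟨x, (Subtype.ext hx.symm : singletonMap x = A)⟩
  · intro U hU
    rw [isOpen_iff_mem_nhds]
    intro x hx
    obtain ⟨hSne, hSdir, hSlub⟩ := myAux_nbhd (X := X) x
    obtain ⟨K, hKS, hKU⟩ := hU.2 _ hSne hSdir _ hSlub hx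
    refine Filter.mem_of_superset hKS.2 ?_
    intro y hy
    exact hU.1 K hKU _ (Set.singleton_subset_iff.mpr hy)
  · intro V hV
    refine ⟨{A | A.val ⊆ V}, ⟨?_, ?_⟩, ?_⟩
    · intro a ha b hb
      exact (hb : b.val ⊆ a.val).trans ha
    · intro S hS hdir a ha haU
      have := myAux_lub_val S hS hdir ha
      obtain ⟨A, hA, hAV⟩ := myAux_shrink S hS hdir V hV (this ▸ haU)
      exact ⟨A, hA, hAV⟩
    · ext A
      simp only [Set.mem_image, Set.mem_inter_iff, Set.mem_setOf_eq]
      constructor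
      · rintro ⟨x, hx, rfl⟩
        exact ⟨Set.singleton_subset_iff.mpr hx,
          (myAux_max_iff _).mpr ⟨x, rfl⟩⟩
      · rintro ⟨hAV, hmax⟩
        obtain ⟨x, hx⟩ := (myAux_max_iff A).mp hmax
        refine ⟨x, ?_, Subtype.ext hx.symm⟩
        exact hAV (hx ▸ rfl)
end

section
/- Let f : ℝ → ℝ be continuous and differentiable at p ∈ ℝ. Then the informatic derivative of the induced map on the interval domain at [p] with respect to the length measurement equals |f′(p)|; concretely: for every ε > 0 there is δ > 0 such that for every compact interval [a,b] with a ≤ p ≤ b and 0 < b − a < δ, one has |(sup f([a,b]) − inf f([a,b]))/(b − a) − |f′(p)|| < ε. -/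
/-- The informatic derivative of the map induced on the interval domain by a
continuous f : ℝ → ℝ, taken at [p] with respect to the length measurement,
equals |f′(p)|. -/
theorem informatic_derivative_eq_abs_deriv (f : ℝ → ℝ) (hf : Continuous f)
    (p : ℝ) (f' : ℝ) (hd : HasDerivAt f f' p) :
    ∀ ε > (0 : ℝ), ∃ δ > (0 : ℝ), ∀ a b : ℝ, a ≤ p → p ≤ b →
      0 < b - a → b - a < δ →
      abs ((sSup (f '' Set.Icc a b) - sInf (f '' Set.Icc a b)) / (b - a) - |f'|) < ε := by
  intro ε hε
  have hε4 : (0:ℝ) < ε/4 := by linarith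
  have hlo := hd.hasFDerivAt.isLittleO.def hε4
  rw [Metric.eventually_nhds_iff] at hlo
  obtain ⟨δ, hδ, hδ'⟩ := hlo
  refine ⟨δ, hδ, ?_⟩
  intro a b hap hpb hba hbaδ
  have key : ∀ x ∈ Set.Icc a b, |f x - f p - (x - p) * f'| ≤ ε/4 * (b - a) := by
    intro x hx
    have hxp : |x - p| ≤ b - a := by
      rw [abs_le]; constructor <;> [linarith [hx.1, hx.2]; linarith [hx.1, hx.2]]
    have hdist : dist x p < δ := by
      rw [Real.dist_eq]; exact lt_of_le_of_lt hxp hbaδ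
    have h := hδ' hdist
    simp only [Real.norm_eq_abs, ContinuousLinearMap.smulRight_apply,
      ContinuousLinearMap.one_apply, smul_eq_mul] at h
    calc |f x - f p - (x - p) * f'| ≤ ε/4 * |x - p| := h
      _ ≤ ε/4 * (b - a) := by nlinarith
  have hK : IsCompact (f '' Set.Icc a b) := (isCompact_Icc).image hf
  have hne : (f '' Set.Icc a b).Nonempty := ⟨f p, ⟨p, ⟨hap, hpb⟩, rfl⟩⟩
  obtain ⟨u, hu, huM⟩ := hK.sSup_mem hne
  obtain ⟨v, hv, hvm⟩ := hK.sInf_mem hne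
  set M := sSup (f '' Set.Icc a b) with hM
  set m := sInf (f '' Set.Icc a b) with hm
  have hMm : m ≤ M := csInf_le_csSup hne hK.isBounded.bddBelow hK.isBounded.bddAbove
  -- upper bound: M - m ≤ (|f'| + ε/2) * (b - a)
  have hku := key u hu
  have hkv := key v hv
  have huv : |u - v| ≤ b - a := by
    rw [abs_le]; constructor <;> [linarith [hu.1, hu.2, hv.1, hv.2]; linarith [hu.1, hu.2, hv.1, hv.2]]
  have huvf : (u - v) * f' ≤ (b - a) * |f'| := by
    calc (u - v) * f' ≤ |(u - v) * f'| := le_abs_self _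
      _ = |u - v| * |f'| := abs_mul _ _
      _ ≤ (b - a) * |f'| := by
          exact mul_le_mul_of_nonneg_right huv (abs_nonneg _)
  have hupper : M - m ≤ (|f'| + ε/2) * (b - a) := by
    have h1 : f u - f v = (f u - f p - (u - p) * f') - (f v - f p - (v - p) * f') + (u - v) * f' := by ring
    have h2 : f u - f v ≤ ε/4 * (b - a) + ε/4 * (b - a) + (b - a) * |f'| := by
      rw [h1]
      have := abs_le.mp hku
      have := abs_le.mp hkv
      linarith [huvf]
    rw [← huM, ← hvm]; linarith
  -- lower bound: M - m ≥ (|f'| - ε/2) * (b - a)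
  have hfaK : f a ∈ f '' Set.Icc a b := ⟨a, ⟨le_refl a, by linarith⟩, rfl⟩
  have hfbK : f b ∈ f '' Set.Icc a b := ⟨b, ⟨by linarith, le_refl b⟩, rfl⟩
  have hMfb : f b ≤ M := le_csSup hK.isBounded.bddAbove hfbK
  have hMfa : f a ≤ M := le_csSup hK.isBounded.bddAbove hfaK
  have hmfb : m ≤ f b := csInf_le hK.isBounded.bddBelow hfbK
  have hmfa : m ≤ f a := csInf_le hK.isBounded.bddBelow hfaK
  have hka := key a ⟨le_refl a, by linarith⟩
  have hkb := key b ⟨by linarith, le_refl b⟩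
  have hfb_fa : |f b - f a| ≥ (b - a) * |f'| - ε/2 * (b - a) := by
    have h1 : (b - a) * f' = (f b - f a) - (f b - f p - (b - p) * f') + (f a - f p - (a - p) * f') := by ring
    have h2 : (b - a) * |f'| = |(b - a) * f'| := by
      rw [abs_mul, abs_of_pos hba]
    rw [h2, h1]
    have := abs_le.mp hka
    have := abs_le.mp hkb
    have habs := abs_sub_abs_le_abs_sub ((f b - f a) - (f b - f p - (b - p) * f') + (f a - f p - (a - p) * f')) (- (f b - f p - (b - p) * f') + (f a - f p - (a - p) * f'))
    have h3 : |(- (f b - f p - (b - p) * f') + (f a - f p - (a - p) * f'))| ≤ ε/2 * (b - a) := by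
      calc |(- (f b - f p - (b - p) * f') + (f a - f p - (a - p) * f'))|
          ≤ |(- (f b - f p - (b - p) * f'))| + |(f a - f p - (a - p) * f')| := abs_add_le _ _
        _ ≤ ε/4 * (b - a) + ε/4 * (b - a) := by rw [abs_neg]; linarith
        _ = ε/2 * (b - a) := by ring
    have h4 : ((f b - f a) - (f b - f p - (b - p) * f') + (f a - f p - (a - p) * f')) - (- (f b - f p - (b - p) * f') + (f a - f p - (a - p) * f')) = f b - f a := by ring
    rw [h4] at habs
    linarith
  have hlower : (|f'| - ε/2) * (b - a) ≤ M - m := by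
    have : |f b - f a| ≤ M - m := by
      rcases abs_cases (f b - f a) with ⟨h, _⟩ | ⟨h, _⟩ <;> rw [h] <;> linarith
    linarith [hfb_fa]
  -- combine
  have hratio_u : (M - m) / (b - a) ≤ |f'| + ε/2 := by
    rw [div_le_iff₀ hba]; linarith [hupper]
  have hratio_l : |f'| - ε/2 ≤ (M - m) / (b - a) := by
    rw [le_div_iff₀ hba]; linarith [hlower]
  rw [abs_lt]; constructor <;> linarith
end

section
/- The Bayesian order is degenerative: for every n ≥ 2 and x, y ∈ Δⁿ with x ⊑ y, if yᵢ = yⱼ > 0 for indices i, j, then xᵢ = xⱼ > 0. -/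
lemma bayes_key (n : ℕ) (x y : Fin n → ℝ) (hx : IsClassicalState n x)
    (σ : Equiv.Perm (Fin n)) (hax : Antitone (fun i => x (σ i)))
    (hay : Antitone (fun i => y (σ i)))
    (hc : ∀ i j : Fin n, (i : ℕ) + 1 = (j : ℕ) → x (σ i) * y (σ j) ≤ x (σ j) * y (σ i))
    (a b : Fin n) (hab : a ≤ b) (hyeq : y (σ a) = y (σ b)) (hpos : 0 < y (σ b)) :
    x (σ a) = x (σ b) ∧ 0 < x (σ b) := by
  -- y is constant on [a,b]
  have ysand : ∀ k : Fin n, a ≤ k → k ≤ b → y (σ k) = y (σ b) := by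
    intro k h1 h2
    have := hay h1
    have := hay h2
    simp only at *
    linarith [hyeq]
  -- x is constant on [a,b]
  have hA : ∀ m : ℕ, (a : ℕ) ≤ m → ∀ hm : m < n, (m ≤ (b : ℕ)) → x (σ ⟨m, hm⟩) = x (σ a) := by
    intro m ham
    induction m, ham using Nat.le_induction with
    | base => intro hm _; rw [Fin.eta]
    | succ m hm ih =>
      intro hm1 hmb
      have hmn : m < n := lt_trans (Nat.lt_succ_self m) hm1
      set k : Fin n := ⟨m, hmn⟩ with hk
      set k' : Fin n := ⟨m + 1, hm1⟩ with hk'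
      have hkb : (k : ℕ) ≤ (b : ℕ) := le_trans (Nat.le_succ m) hmb
      have hak : a ≤ k := hm
      have hak' : a ≤ k' := le_trans (α := ℕ) hm (Nat.le_succ m)
      have hkk' : k ≤ k' := Nat.le_succ m
      have hyk : y (σ k) = y (σ b) := ysand k hak hkb
      have hyk' : y (σ k') = y (σ b) := ysand k' hak' hmb
      have hcc := hc k k' rfl
      rw [hyk, hyk'] at hcc
      have h1 : x (σ k) ≤ x (σ k') := le_of_mul_le_mul_right hcc hpos
      have h2 : x (σ k') ≤ x (σ k) := hax hkk'
      have : x (σ k') = x (σ k) := le_antisymm h2 h1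
      rw [this]
      exact ih hmn hkb
  have hxab : x (σ a) = x (σ b) := by
    have := hA (b : ℕ) hab b.2 le_rfl
    simpa [Fin.eta] using this.symm
  refine ⟨hxab, ?_⟩
  by_contra hnp
  push_neg at hnp
  have hxb0 : x (σ b) = 0 := le_antisymm hnp (hx.1 _)
  -- downward: x (σ k) = 0 for k ≤ b
  have hB : ∀ m : ℕ, m ≤ (b : ℕ) → x (σ ⟨(b : ℕ) - m, lt_of_le_of_lt (Nat.sub_le _ _) b.2⟩) = 0 := by
    intro m
    induction m with
    | zero => intro _; simpa [Fin.eta] using hxb0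
    | succ m ih =>
      intro hmb
      have hmb' : m ≤ (b : ℕ) := le_trans (Nat.le_succ m) hmb
      have ihm := ih hmb'
      set k : Fin n := ⟨(b : ℕ) - (m + 1), lt_of_le_of_lt (Nat.sub_le _ _) b.2⟩ with hkdef
      set k' : Fin n := ⟨(b : ℕ) - m, lt_of_le_of_lt (Nat.sub_le _ _) b.2⟩ with hk'def
      have hsucc : (k : ℕ) + 1 = (k' : ℕ) := by
        simp only [hkdef, hk'def]
        omega
      have hk'b : k' ≤ b := by
        simp only [Fin.le_def, hk'def]
        exact Nat.sub_le _ _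
      have hyk' : 0 < y (σ k') := lt_of_lt_of_le hpos (hay hk'b)
      have hcc := hc k k' hsucc
      rw [ihm] at hcc
      simp only [zero_mul] at hcc
      have hx0 : 0 ≤ x (σ k) := hx.1 _
      nlinarith
  have hall : ∀ k : Fin n, x (σ k) = 0 := by
    intro k
    rcases le_total k b with h | h
    · have hkb : (k : ℕ) ≤ (b : ℕ) := h
      have h2 := hB ((b : ℕ) - (k : ℕ)) (Nat.sub_le _ _)
      have heq : (⟨(b : ℕ) - ((b : ℕ) - (k : ℕ)), lt_of_le_of_lt (Nat.sub_le _ _) b.2⟩ : Fin n) = k :=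
        Fin.ext (by simp [Nat.sub_sub_self hkb])
      rwa [heq] at h2
    · have := hax h
      simp only at this
      exact le_antisymm (hxb0 ▸ this) (hx.1 _)
  have hsum : ∑ k, x (σ k) = 1 := by
    rw [Equiv.sum_comp σ x]; exact hx.2
  rw [Finset.sum_congr rfl (fun k _ => hall k)] at hsum
  simp at hsum

/-- The Bayesian order is degenerative: if x ⊑ y and yᵢ = yⱼ > 0 then xᵢ = xⱼ > 0. -/
theorem bayesian_order_degenerative (n : ℕ) (hn : 2 ≤ n)
    (x y : Fin n → ℝ) (hx : IsClassicalState n x) (hy : IsClassicalState n y)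
    (hxy : bayesLE x y) (i j : Fin n) (hij : y i = y j) (hpos : 0 < y i) :
    x i = x j ∧ 0 < x i := by
  obtain ⟨σ, hax, hay, hc⟩ := hxy
  have hi : σ (σ.symm i) = i := σ.apply_symm_apply i
  have hj : σ (σ.symm j) = j := σ.apply_symm_apply j
  rcases le_total (σ.symm i) (σ.symm j) with h | h
  · have := bayes_key n x y hx σ hax hay hc (σ.symm i) (σ.symm j) h
      (by rw [hi, hj]; exact hij) (by rw [hj]; exact hij ▸ hpos)
    rw [hi, hj] at this
    exact ⟨this.1, this.1 ▸ this.2⟩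
  · have := bayes_key n x y hx σ hax hay hc (σ.symm j) (σ.symm i) h
      (by rw [hi, hj]; exact hij.symm) (by rw [hi]; exact hpos)
    rw [hi, hj] at this
    exact ⟨this.1.symm, this.2⟩
end
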